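/- If the 3CM M halts, then for every X ∈ {O, SO, R, E} and every instance I, every fair X-derivation from the knowledge base ⟨R_M, I⟩ is finite (i.e., the X-chase terminates on ⟨R_M, I⟩ for all instances I). -/

import Mathlib

set_option maxHeartbeats 1000000
set_option synthInstance.maxHeartbeats 1000000
set_option synthInstance.maxSize 512

attribute [local instance] Classical.propDecidable

noncomputable section

/-! ### Terms and atoms -/

/-- Variables: ordinary variables `Sum.inl n`, or fresh variables `Sum.inr (c, k)`
introduced by the trigger with code `c` for the head variable with code `k`. -/
abbrev Var : Type := ℕ ⊕ (ℕ × ℕ)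

/-- Terms: constants `Sum.inl c` or variables `Sum.inr v`. -/
abbrev FTerm : Type := ℕ ⊕ Var

def ct (n : ℕ) : FTerm := Sum.inl n
def vt (n : ℕ) : FTerm := Sum.inr (Sum.inl n)

/-- An atom: a predicate name together with its list of arguments. -/
abbrev Atom : Type := ℕ × List FTerm

/-- Active domain: all terms occurring in an atom set. -/
def adom (J : Set Atom) : Set FTerm := {t | ∃ a ∈ J, t ∈ a.2}

def atomVarsF (a : Atom) : Finset Var := (a.2.filterMap Sum.getRight?).toFinset

def varsF (A : Finset Atom) : Finset Var := A.biUnion atomVarsF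

def setVars (J : Set Atom) : Set Var := {v | ∃ a ∈ J, Sum.inr v ∈ a.2}

/-! ### Substitutions and homomorphisms -/

abbrev Subst := Var → FTerm

def applyT (σ : Subst) : FTerm → FTerm
  | Sum.inl c => Sum.inl c
  | Sum.inr v => σ v

def applyA (σ : Subst) (a : Atom) : Atom := (a.1, a.2.map (applyT σ))

def IsHomOn (σ : Subst) (A B : Set Atom) : Prop := ∀ a ∈ A, applyA σ a ∈ B

def HomBetween (A B : Set Atom) : Prop := ∃ σ : Subst, IsHomOn σ A B

def IsRetraction (σ : Subst) (A B : Set Atom) : Prop :=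
  IsHomOn σ A B ∧ ∀ v ∈ setVars A ∩ setVars B, σ v = Sum.inr v

/-- Isomorphism of atom sets: a pair of mutually inverse homomorphisms. -/
def Isomorphic (A B : Set Atom) : Prop :=
  ∃ σ τ : Subst, IsHomOn σ A B ∧ IsHomOn τ B A ∧
    (∀ a ∈ A, applyA τ (applyA σ a) = a) ∧ (∀ b ∈ B, applyA σ (applyA τ b) = b)

/-! ### Rules -/

/-- A rule is a pair (body, head). Its existential variables are the head variables
not occurring in the body; its frontier the variables shared by body and head.
A rule is Datalog when every head variable occurs in the body. -/
abbrev Rule : Type := Finset Atom × Finset Atom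

def frontierOf (R : Rule) : Finset Var := varsF R.1 ∩ varsF R.2

def DatRules (Rset : Finset Rule) : Finset Rule := Rset.filter fun R => varsF R.2 ⊆ varsF R.1
def NDatRules (Rset : Finset Rule) : Finset Rule := Rset.filter fun R => ¬ varsF R.2 ⊆ varsF R.1

/-- Satisfaction of a rule in an atom set. -/
def SatisfiesRule (J : Set Atom) (R : Rule) : Prop :=
  ∀ σ : Subst, IsHomOn σ (R.1 : Set Atom) J →
    ∃ σ' : Subst, (∀ v ∈ varsF R.1, σ' v = σ v) ∧ IsHomOn σ' (R.2 : Set Atom) J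

def IsModel (Rset : Finset Rule) (I J : Set Atom) : Prop :=
  (∀ R ∈ Rset, SatisfiesRule J R) ∧ HomBetween I J

/-- BCQ entailment: every model of the KB satisfies the query. -/
def Entails (Rset : Finset Rule) (I q : Set Atom) : Prop :=
  ∀ J : Set Atom, IsModel Rset I J → HomBetween q J

def IsUniversalModel (Rset : Finset Rule) (I U : Set Atom) : Prop :=
  IsModel Rset I U ∧ ∀ J : Set Atom, IsModel Rset I J → HomBetween U J

/-! ### Triggers -/

structure Trigger where
  rule : Rule
  sub : Subst

/-- Injective code of a trigger (a trigger is determined by its rule and the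
restriction of its substitution to the body variables). -/
def Trigger.code (t : Trigger) : ℕ :=
  Encodable.encode (t.rule, (varsF t.rule.1).image fun v => (v, t.sub v))

/-- The canonical extension of the trigger substitution, mapping each existential
variable `z` to the fresh variable unique for `z` and the trigger. -/
def Trigger.extSub (t : Trigger) : Subst := fun v =>
  if v ∈ varsF t.rule.1 then t.sub v
  else Sum.inr (Sum.inr (t.code, Encodable.encode v))

def Trigger.out (t : Trigger) : Finset Atom := t.rule.2.image (applyA t.extSub)

def Trigger.isOn (t : Trigger) (J : Set Atom) : Prop := IsHomOn t.sub (t.rule.1 : Set Atom) J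

/-! ### Chase variants, derivations, chase termination classes -/

inductive ChaseVariant : Type
  | O | SO | R | E
deriving DecidableEq

def Applicable : ChaseVariant → Trigger → Set Atom → Prop
  | .O, t, J => ¬ ((t.out : Set Atom) ⊆ J)
  | .SO, t, J => ∀ t' : Trigger, t'.rule = t.rule → t'.isOn J →
      (∀ v ∈ frontierOf t.rule, t'.sub v = t.sub v) → ¬ ((t'.out : Set Atom) ⊆ J)
  | .R, t, J => ¬ ∃ σ : Subst, IsRetraction σ (J ∪ (t.out : Set Atom)) J
  | .E, t, J => ¬ ∃ σ : Subst, IsHomOn σ (J ∪ (t.out : Set Atom)) J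

def instSeq (I : Set Atom) (steps : ℕ → Option Trigger) : ℕ → Set Atom
  | 0 => I
  | n + 1 => instSeq I steps n ∪
      (match steps n with
        | none => (∅ : Set Atom)
        | some t => (t.out : Set Atom))

/-- A (possibly infinite) derivation from the knowledge base `⟨Rset, I⟩`. -/
structure Deriv (Rset : Finset Rule) (I : Set Atom) where
  steps : ℕ → Option Trigger
  prefix_closed : ∀ n, steps n = none → steps (n + 1) = none
  valid : ∀ n t, steps n = some t →
    t.rule ∈ Rset ∧ t.isOn (instSeq I steps n) ∧ ¬ ((t.out : Set Atom) ⊆ instSeq I steps n)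

def Deriv.inst {Rset : Finset Rule} {I : Set Atom} (D : Deriv Rset I) (n : ℕ) :
    Set Atom := instSeq I D.steps n

def Deriv.res {Rset : Finset Rule} {I : Set Atom} (D : Deriv Rset I) : Set Atom :=
  ⋃ n, D.inst n

def Deriv.Finite {Rset : Finset Rule} {I : Set Atom} (D : Deriv Rset I) : Prop :=
  ∃ n, D.steps n = none

def Deriv.IsX {Rset : Finset Rule} {I : Set Atom} (X : ChaseVariant)
    (D : Deriv Rset I) : Prop :=
  ∀ n t, D.steps n = some t → Applicable X t (D.inst n)

def Deriv.Fair {Rset : Finset Rule} {I : Set Atom} (X : ChaseVariant)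
    (D : Deriv Rset I) : Prop :=
  ∀ i, ∀ t : Trigger, t.rule ∈ Rset → t.isOn (D.inst i) → Applicable X t (D.inst i) →
    ∃ j, i < j ∧ ¬ Applicable X t (D.inst j)

/-- All-instance, all-derivation chase termination. -/
def CTall (X : ChaseVariant) (Rset : Finset Rule) : Prop :=
  ∀ I : Finset Atom, ∀ D : Deriv Rset (I : Set Atom), D.IsX X → D.Fair X → D.Finite

/-- All-instance, some-derivation chase termination. -/
def CTex (X : ChaseVariant) (Rset : Finset Rule) : Prop :=
  ∀ I : Finset Atom, ∃ D : Deriv Rset (I : Set Atom), D.IsX X ∧ D.Fair X ∧ D.Finite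

inductive CTQuant : Type
  | all | ex

def CT (X : ChaseVariant) : CTQuant → Finset Rule → Prop
  | .all => CTall X
  | .ex => CTex X

/-- The result of some fair `X`-derivation from `⟨Rset, J⟩`. -/
def ChX (X : ChaseVariant) (Rset : Finset Rule) (J : Set Atom) : Set Atom :=
  if h : ∃ D : Deriv Rset J, D.IsX X ∧ D.Fair X then h.choose.res else J

/-! ### Gaifman graph, treewidth, bts -/

def gaifmanAdj (J : Set Atom) (u v : FTerm) : Prop :=
  u ≠ v ∧ ∃ a ∈ J, u ∈ a.2 ∧ v ∈ a.2

/-- The (Gaifman graph of the) atom set `J` has treewidth at most `k`: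
there is a tree decomposition all of whose bags have size at most `k + 1`. -/
def TreewidthAtMost (J : Set Atom) (k : ℕ) : Prop :=
  ∃ (ι : Type) (T : SimpleGraph ι) (bag : ι → Finset FTerm),
    T.Connected ∧ T.IsAcyclic ∧
    (∀ v ∈ adom J, ∃ i, v ∈ bag i) ∧
    (∀ u v : FTerm, gaifmanAdj J u v → ∃ i, u ∈ bag i ∧ v ∈ bag i) ∧
    (∀ v : FTerm, (SimpleGraph.induce {i | v ∈ bag i} T).Preconnected) ∧
    (∀ i, (bag i).card ≤ k + 1)

/-- Bounded-treewidth sets: for every instance, some universal model of bounded treewidth. -/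
def IsBts (Rset : Finset Rule) : Prop :=
  ∀ I : Finset Atom, ∃ (k : ℕ) (U : Set Atom),
    IsUniversalModel Rset (I : Set Atom) U ∧ TreewidthAtMost U k

/-! ### Three-counter machines -/

/-- A three-counter machine: states `0, …, m − 1` (state `0` is initial, standing for `q₁`),
and a partial transition function given by a finite table. -/
structure TCM where
  m : ℕ
  hm : 0 < m
  δ : List ((ℕ × Bool × Bool) × (ℕ × Int × Int))
  keys_nodup : (δ.map Prod.fst).Nodup
  wf : ∀ e ∈ δ, e.1.1 < m ∧ e.2.1 < m ∧ e.2.2.1.natAbs ≤ 1 ∧ e.2.2.2.natAbs ≤ 1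

/-- A configuration: state, two counters, and the time counter. -/
abbrev Config : Type := ℕ × ℕ × ℕ × ℕ

def TCM.step (M : TCM) (q : ℕ) (b1 b2 : Bool) : Option (ℕ × Int × Int) :=
  (M.δ.find? fun e => decide (e.1 = (q, b1, b2))).map Prod.snd

def TCM.next (M : TCM) (C : Config) : Option Config :=
  match M.step C.1 (decide (C.2.1 ≠ 0)) (decide (C.2.2.1 ≠ 0)) with
  | none => none
  | some (q', d1, d2) =>
      some (q', ((C.2.1 : ℤ) + d1).toNat, ((C.2.2.1 : ℤ) + d2).toNat, C.2.2.2 + 1)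

def TCM.run (M : TCM) : ℕ → Option Config
  | 0 => some (0, 0, 0, 0)
  | n + 1 => (M.run n).bind M.next

/-- The machine halts: some reachable configuration has no successor. -/
def TCM.Halts (M : TCM) : Prop := ∃ n C, M.run n = some C ∧ M.next C = none

/-! ### Prime encoding of configurations -/

/-- The least prime strictly greater than `n` (computably). -/
def nextPrime (n : ℕ) : ℕ := Nat.find (Nat.exists_infinite_primes (n + 1))

/-- `prm i` is the `(i+1)`-st prime `p_{i+1}`, i.e. `prm 0 = 2`. -/
def prm : ℕ → ℕ
  | 0 => 2
  | k + 1 => nextPrime (prm k)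

/-- Encoding of a configuration as a natural number. -/
def TCM.enc (M : TCM) (C : Config) : ℕ :=
  prm C.1 * prm M.m ^ C.2.1 * prm (M.m + 1) ^ C.2.2.1 * prm (M.m + 2) ^ C.2.2.2

/-- `p = p₁ ⋯ p_{m+3}`. -/
def TCM.p (M : TCM) : ℕ := ∏ i ∈ Finset.range (M.m + 3), prm i

/-- Decode the state from a residue modulo `M.p`. -/
def TCM.stateOf (M : TCM) (i : ℕ) : Option ℕ :=
  (List.range M.m).find? fun s => decide (prm s ∣ i)

/-- The canonical pair `(q_i, r_i)` realizing the prime encoding of the transitions. -/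
def TCM.qr (M : TCM) (i : ℕ) : ℕ × ℕ :=
  match M.stateOf i with
  | none => (1, 1)
  | some s =>
      let b1 : Bool := decide (prm M.m ∣ i)
      let b2 : Bool := decide (prm (M.m + 1) ∣ i)
      match M.step s b1 b2 with
      | none => (1, 1)
      | some (s', d1, d2) =>
          let e1 : ℤ := if b1 then d1 else max d1 0
          let e2 : ℤ := if b2 then d2 else max d2 0
          let num : ℕ := prm s' * prm (M.m + 2) *
            (if e1 = 1 then prm M.m else 1) * (if e2 = 1 then prm (M.m + 1) else 1)
          let den : ℕ := prm s *
            (if e1 = -1 then prm M.m else 1) * (if e2 = -1 then prm (M.m + 1) else 1)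
          (num / Nat.gcd num den, den / Nat.gcd num den)

def TCM.qi (M : TCM) (i : ℕ) : ℕ := (M.qr i).1
def TCM.ri (M : TCM) (i : ℕ) : ℕ := (M.qr i).2

/-- `g(n) = q_{n mod p} · n / r_{n mod p}`. -/
def TCM.g (M : TCM) (n : ℕ) : ℕ := M.qi (n % M.p) * n / M.ri (n % M.p)

/-- `gᵏ(2)`. -/
def TCM.gIter (M : TCM) (k : ℕ) : ℕ := (M.g)^[k] 2

/-- `G = {gᵏ(2) : k ∈ ℕ}`. -/
def TCM.Gset (M : TCM) : Set ℕ := Set.range M.gIter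

/-! ### The rule set `R_M` -/

def pEnd : ℕ := 0
def pFlood : ℕ := 1
def pS0 : ℕ := 2
def pS : ℕ := 3
def pG : ℕ := 4
def pR (i : ℕ) : ℕ := 5 + 2 * i
def pT (i : ℕ) : ℕ := 6 + 2 * i

/-- `j`-th vertex of an `S`-path of length `n` from variable `a` to variable `b`
with fresh intermediate variables `base + 1, …, base + n − 1`. -/
def pathVar (a b base n j : ℕ) : FTerm :=
  if j = 0 then vt a else if j = n then vt b else vt (base + j)

/-- The atoms of `Sⁿ(x_a, x_b)`: an `S`-path of length `n`. -/
def spath (a b base n : ℕ) : Finset Atom :=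
  (Finset.range n).image fun j =>
    (pS, [pathVar a b base n j, pathVar a b base n (j + 1)])

/-- Rule (1): `S₀(x,y) → S(x,y)`. -/
def ruleS : Rule := ({(pS0, [vt 0, vt 1])}, {(pS, [vt 0, vt 1])})

/-- Rule (2): `R_i(x,y) ∧ S(y,z) → R_{i+1}(x,z)` (indices modulo `p`). -/
def ruleR (M : TCM) (i : ℕ) : Rule :=
  ({(pR i, [vt 0, vt 1]), (pS, [vt 1, vt 2])}, {(pR ((i + 1) % M.p), [vt 0, vt 2])})

/-- Rule (3): `T_i(x,y,z) ∧ S^{r_i}(y,y′) ∧ S^{q_i}(z,z′) → T_i(x,y′,z′)`. -/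
def ruleT (M : TCM) (i : ℕ) : Rule :=
  (({(pT i, [vt 0, vt 1, vt 2])} : Finset Atom) ∪ spath 1 3 10 (M.ri i) ∪
      spath 2 4 (11 + M.ri i) (M.qi i),
    {(pT i, [vt 0, vt 3, vt 4])})

/-- Rule (4): `S(x,y) → Flood(y)`. -/
def ruleFloodProp : Rule := ({(pS, [vt 0, vt 1])}, {(pFlood, [vt 1])})

/-- Rule (5): `End(x) → S(x,x)`. -/
def ruleSEnd : Rule := ({(pEnd, [vt 0])}, {(pS, [vt 0, vt 0])})

/-- Rule (6): `S²(x,y) → G(x,y)`. -/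
def ruleGInit : Rule := (spath 0 1 10 2, {(pG, [vt 0, vt 1])})

/-- Rule (7): `G(x,y) ∧ R_i(x,y) ∧ T_i(x,y,z) → G(x,z)`. -/
def ruleGStep (i : ℕ) : Rule :=
  ({(pG, [vt 0, vt 1]), (pR i, [vt 0, vt 1]), (pT i, [vt 0, vt 1, vt 2])},
    {(pG, [vt 0, vt 2])})

/-- Rule (8): `Flood(x) ∧ Flood(y) ∧ Flood(z) → G(x,y) ∧ ⋀_{j<p} (R_j(x,y) ∧ T_j(x,y,z))`. -/
def ruleFloodGen (M : TCM) : Rule :=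
  ({(pFlood, [vt 0]), (pFlood, [vt 1]), (pFlood, [vt 2])},
    ({(pG, [vt 0, vt 1])} : Finset Atom) ∪
      (Finset.range M.p).biUnion fun j =>
        {(pR j, [vt 0, vt 1]), (pT j, [vt 0, vt 1, vt 2])})

/-- Rule (9): `G(y,z) ∧ End(z) → ∃x (S₀(x,y) ∧ R₀(x,x) ∧ ⋀_{j<p} T_j(x,x,x))`. -/
def ruleEx (M : TCM) : Rule :=
  ({(pG, [vt 1, vt 2]), (pEnd, [vt 2])},
    ({(pS0, [vt 0, vt 1]), (pR 0, [vt 0, vt 0])} : Finset Atom) ∪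
      (Finset.range M.p).biUnion fun j => {(pT j, [vt 0, vt 0, vt 0])})

/-- The rule set `R_M`. -/
def RM (M : TCM) : Finset Rule :=
  ({ruleS, ruleFloodProp, ruleSEnd, ruleGInit, ruleFloodGen M, ruleEx M} : Finset Rule) ∪
    (Finset.range M.p).biUnion fun i => {ruleR M i, ruleT M i, ruleGStep i}

/-- The alternating Datalog/non-Datalog chase steps `Step^X_n`. -/
def StepX (X : ChaseVariant) (M : TCM) : ℕ → Set Atom → Set Atom
  | 0, I => ChX X (DatRules (RM M)) I
  | n + 1, I => ChX X (DatRules (RM M)) (ChX X (NDatRules (RM M)) (StepX X M n I))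

/-- The constant `w`, the "well of positivity". -/
def wC : FTerm := ct 0

/-- The instance `{End(w)}`. -/
def IE : Set Atom := {(pEnd, [wC])}

/-- Membership in the signature of `R_M` (predicate together with its arity). -/
def InSig (M : TCM) (a : Atom) : Prop :=
  ((a.1 = pEnd ∨ a.1 = pFlood) ∧ a.2.length = 1) ∨
  ((a.1 = pS0 ∨ a.1 = pS ∨ a.1 = pG ∨ ∃ i < M.p, a.1 = pR i) ∧ a.2.length = 2) ∨
  ((∃ i < M.p, a.1 = pT i) ∧ a.2.length = 3)

/-- The critical instance: all atoms `P(w, …, w)` over the signature of `R_M`. -/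
def Crit (M : TCM) : Set Atom := {a | InSig M a ∧ ∀ t ∈ a.2, t = wC}

/-- An `S`-path of length `k` from `s` to `t` in `J`. -/
def SPath (J : Set Atom) : ℕ → FTerm → FTerm → Prop
  | 0, s, t => s = t
  | k + 1, s, t => ∃ u, (pS, [s, u]) ∈ J ∧ SPath J k u t

/-- The restriction `J|_S`: atoms of `J` all of whose terms belong to `S`. -/
def restrictTo (J : Set Atom) (S : Set FTerm) : Set Atom := {a ∈ J | ∀ t ∈ a.2, t ∈ S}

/-- An explicit injective encoding of three-counter machines by natural numbers. -/
def encodeTCM (M : TCM) : ℕ := Encodable.encode (M.m, M.δ)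
namespace Stmt6

/-! ### Part 1: arithmetic of the prime encoding -/

lemma nextPrime_prime (n : ℕ) : (nextPrime n).Prime :=
  (Nat.find_spec (Nat.exists_infinite_primes (n + 1))).2

lemma lt_nextPrime (n : ℕ) : n < nextPrime n :=
  (Nat.find_spec (Nat.exists_infinite_primes (n + 1))).1

lemma prm_prime (k : ℕ) : (prm k).Prime := by
  cases k with
  | zero => exact Nat.prime_two
  | succ k => exact nextPrime_prime _

lemma prm_strictMono : StrictMono prm :=
  strictMono_nat_of_lt_succ fun k => lt_nextPrime _

lemma prm_pos (k : ℕ) : 0 < prm k := (prm_prime k).pos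

lemma prm_dvd_prm_iff {j l : ℕ} : prm j ∣ prm l ↔ j = l := by
  constructor
  · intro h
    exact prm_strictMono.injective
      ((Nat.prime_dvd_prime_iff_eq (prm_prime j) (prm_prime l)).1 h)
  · rintro rfl; exact dvd_rfl

lemma prm_dvd_pow_iff {j l e : ℕ} : prm j ∣ prm l ^ e ↔ (j = l ∧ 0 < e) := by
  constructor
  · intro h
    rcases Nat.eq_zero_or_pos e with rfl | he
    · rw [pow_zero] at h
      exact absurd (Nat.dvd_one.mp h) (prm_prime j).ne_one
    · exact ⟨prm_dvd_prm_iff.1 ((prm_prime j).prime.dvd_of_dvd_pow h), he⟩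
  · rintro ⟨rfl, he⟩
    exact dvd_pow_self _ he.ne'

lemma dvd_enc_iff (M : TCM) (C : Config) {j : ℕ} :
    prm j ∣ M.enc C ↔ (j = C.1 ∨ (j = M.m ∧ 0 < C.2.1) ∨ (j = M.m + 1 ∧ 0 < C.2.2.1) ∨
      (j = M.m + 2 ∧ 0 < C.2.2.2)) := by
  have hp := prm_prime j
  rw [TCM.enc, hp.dvd_mul, hp.dvd_mul, hp.dvd_mul, prm_dvd_prm_iff, prm_dvd_pow_iff,
    prm_dvd_pow_iff, prm_dvd_pow_iff]
  tauto

lemma prm_dvd_p (M : TCM) {j : ℕ} (hj : j < M.m + 3) : prm j ∣ M.p :=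
  Finset.dvd_prod_of_mem _ (Finset.mem_range.2 hj)

lemma p_pos (M : TCM) : 0 < M.p :=
  Finset.prod_pos fun i _ => prm_pos i

lemma dvd_mod_p_iff (M : TCM) {j n : ℕ} (hj : j < M.m + 3) : prm j ∣ n % M.p ↔ prm j ∣ n :=
  Nat.dvd_mod_iff (prm_dvd_p M hj)

lemma stateOf_enc (M : TCM) (C : Config) (hC : C.1 < M.m) :
    M.stateOf (M.enc C % M.p) = some C.1 := by
  rw [TCM.stateOf, List.find?_eq_some_iff_getElem]
  refine ⟨?_, C.1, by simpa using hC, by simp, ?_⟩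
  · rw [decide_eq_true_eq, dvd_mod_p_iff M (by omega), dvd_enc_iff]
    left; rfl
  · intro j hj
    have hj' : j < M.m := lt_trans hj hC
    simp only [List.getElem_range, Bool.not_eq_true', decide_eq_false_iff_not]
    rw [dvd_mod_p_iff M (by omega), dvd_enc_iff]
    push_neg
    refine ⟨by omega, by omega, by omega, by omega⟩

lemma b1_enc (M : TCM) (C : Config) (hC : C.1 < M.m) :
    decide (prm M.m ∣ M.enc C % M.p) = decide (C.2.1 ≠ 0) := by
  rw [decide_eq_decide, dvd_mod_p_iff M (by omega), dvd_enc_iff]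
  constructor
  · rintro (h | h | h | h) <;> omega
  · intro h; right; left; exact ⟨rfl, by omega⟩

lemma b2_enc (M : TCM) (C : Config) (hC : C.1 < M.m) :
    decide (prm (M.m + 1) ∣ M.enc C % M.p) = decide (C.2.2.1 ≠ 0) := by
  rw [decide_eq_decide, dvd_mod_p_iff M (by omega), dvd_enc_iff]
  constructor
  · rintro (h | h | h | h) <;> omega
  · intro h; right; right; left; exact ⟨rfl, by omega⟩

lemma step_mem (M : TCM) {q : ℕ} {b1 b2 : Bool} {v : ℕ × Int × Int}
    (h : M.step q b1 b2 = some v) : ∃ e ∈ M.δ, e.2 = v := by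
  rw [TCM.step, Option.map_eq_some_iff] at h
  obtain ⟨a, ha, hav⟩ := h
  exact ⟨a, List.mem_of_find?_eq_some ha, hav⟩

lemma run_state_lt (M : TCM) : ∀ n C, M.run n = some C → C.1 < M.m := by
  intro n
  induction n with
  | zero => intro C hC; rw [TCM.run] at hC; cases hC; exact M.hm
  | succ n ih =>
    intro C hC
    rw [TCM.run, Option.bind_eq_some_iff] at hC
    obtain ⟨C₀, h₀, hnext⟩ := hC
    rw [TCM.next] at hnext
    cases hstep : M.step C₀.1 (decide (C₀.2.1 ≠ 0)) (decide (C₀.2.2.1 ≠ 0)) with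
    | none => rw [hstep] at hnext; exact absurd hnext (by simp)
    | some v =>
      rw [hstep] at hnext
      obtain ⟨e, he, hev⟩ := step_mem M hstep
      have := (M.wf e he).2.1
      cases hnext
      simp only []
      rw [← hev] at *
      exact this

end Stmt6
namespace Stmt6

lemma counter_identity (P v : ℕ) (d : ℤ) (b : Bool) (hb : b = true ↔ v ≠ 0)
    (hd : d.natAbs ≤ 1) (hP : 0 < P) :
    (if (if b then d else max d 0) = 1 then P else 1) * P ^ v
      = (if (if b then d else max d 0) = -1 then P else 1) * P ^ ((v : ℤ) + d).toNat := by
  have hd' : d = -1 ∨ d = 0 ∨ d = 1 := by omega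
  cases b with
  | false =>
    have hv : v = 0 := by
      by_contra hv
      exact absurd (hb.2 hv) (by simp)
    subst hv
    rcases hd' with rfl | rfl | rfl <;> norm_num <;>
      simp [show ((-1 : ℤ)).toNat = 0 from rfl]
  | true =>
    have hv : v ≠ 0 := hb.1 rfl
    rcases hd' with rfl | rfl | rfl
    · have ht : ((v : ℤ) + -1).toNat = v - 1 := by omega
      rw [ht]
      norm_num
      rw [← pow_succ']
      congr 1
      omega
    · have ht : ((v : ℤ) + 0).toNat = v := by omega
      rw [ht]; norm_num
    · have ht : ((v : ℤ) + 1).toNat = v + 1 := by omega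
      rw [ht]
      norm_num
      rw [← pow_succ']

lemma qr_enc_move (M : TCM) (q v1 v2 t : ℕ) (hC : q < M.m) {s' : ℕ} {d1 d2 : ℤ}
    (hstep : M.step q (decide (v1 ≠ 0)) (decide (v2 ≠ 0)) = some (s', d1, d2)) :
    M.qr (M.enc (q, v1, v2, t) % M.p) =
      (let e1 : ℤ := if decide (v1 ≠ 0) then d1 else max d1 0
       let e2 : ℤ := if decide (v2 ≠ 0) then d2 else max d2 0
       let num : ℕ := prm s' * prm (M.m + 2) * (if e1 = 1 then prm M.m else 1) *
         (if e2 = 1 then prm (M.m + 1) else 1)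
       let den : ℕ := prm q * (if e1 = -1 then prm M.m else 1) *
         (if e2 = -1 then prm (M.m + 1) else 1)
       (num / Nat.gcd num den, den / Nat.gcd num den)) := by
  have hstate := stateOf_enc M (q, v1, v2, t) hC
  have hb1 := b1_enc M (q, v1, v2, t) hC
  have hb2 := b2_enc M (q, v1, v2, t) hC
  rw [TCM.qr, hstate]
  simp only [hb1, hb2, hstep]

lemma qr_enc_stuck (M : TCM) (q v1 v2 t : ℕ) (hC : q < M.m)
    (hstep : M.step q (decide (v1 ≠ 0)) (decide (v2 ≠ 0)) = none) :
    M.qr (M.enc (q, v1, v2, t) % M.p) = (1, 1) := by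
  have hstate := stateOf_enc M (q, v1, v2, t) hC
  have hb1 := b1_enc M (q, v1, v2, t) hC
  have hb2 := b2_enc M (q, v1, v2, t) hC
  rw [TCM.qr, hstate]
  simp only [hb1, hb2, hstep]

end Stmt6
namespace Stmt6

lemma if_pos_nat {c : Prop} [Decidable c] {P : ℕ} (hP : 0 < P) : 0 < if c then P else 1 := by
  split
  · exact hP
  · exact one_pos

lemma g_enc_move (M : TCM) (q v1 v2 t : ℕ) (hC : q < M.m) {s' : ℕ} {d1 d2 : ℤ}
    (hstep : M.step q (decide (v1 ≠ 0)) (decide (v2 ≠ 0)) = some (s', d1, d2))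
    (hd1 : d1.natAbs ≤ 1) (hd2 : d2.natAbs ≤ 1) :
    M.g (M.enc (q, v1, v2, t)) =
      M.enc (s', ((v1 : ℤ) + d1).toNat, ((v2 : ℤ) + d2).toNat, t + 1) := by
  have hqr := qr_enc_move M q v1 v2 t hC hstep
  simp only [] at hqr
  set e1 : ℤ := if decide (v1 ≠ 0) then d1 else max d1 0 with he1
  set e2 : ℤ := if decide (v2 ≠ 0) then d2 else max d2 0 with he2
  set num : ℕ := prm s' * prm (M.m + 2) * (if e1 = 1 then prm M.m else 1) *
    (if e2 = 1 then prm (M.m + 1) else 1) with hnum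
  set den : ℕ := prm q * (if e1 = -1 then prm M.m else 1) *
    (if e2 = -1 then prm (M.m + 1) else 1) with hden
  set n : ℕ := M.enc (q, v1, v2, t) with hn
  set w1 : ℕ := ((v1 : ℤ) + d1).toNat with hw1
  set w2 : ℕ := ((v2 : ℤ) + d2).toNat with hw2
  set n' : ℕ := M.enc (s', w1, w2, t + 1) with hn'
  have hnexp : n = prm q * prm M.m ^ v1 * prm (M.m + 1) ^ v2 * prm (M.m + 2) ^ t := rfl
  have hn'exp : n' = prm s' * prm M.m ^ w1 * prm (M.m + 1) ^ w2 * prm (M.m + 2) ^ (t + 1) := rfl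
  have cnt1 : (if e1 = 1 then prm M.m else 1) * prm M.m ^ v1
      = (if e1 = -1 then prm M.m else 1) * prm M.m ^ w1 :=
    counter_identity _ _ _ _ (by simp) hd1 (prm_pos _)
  have cnt2 : (if e2 = 1 then prm (M.m + 1) else 1) * prm (M.m + 1) ^ v2
      = (if e2 = -1 then prm (M.m + 1) else 1) * prm (M.m + 1) ^ w2 :=
    counter_identity _ _ _ _ (by simp) hd2 (prm_pos _)
  have key : num * n = den * n' := by
    rw [hnum, hden, hnexp, hn'exp]
    calc prm s' * prm (M.m + 2) * (if e1 = 1 then prm M.m else 1) *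
          (if e2 = 1 then prm (M.m + 1) else 1) *
          (prm q * prm M.m ^ v1 * prm (M.m + 1) ^ v2 * prm (M.m + 2) ^ t)
        = ((if e1 = 1 then prm M.m else 1) * prm M.m ^ v1) *
          (((if e2 = 1 then prm (M.m + 1) else 1) * prm (M.m + 1) ^ v2) *
            (prm s' * prm q * (prm (M.m + 2) ^ (t + 1)))) := by ring
      _ = ((if e1 = -1 then prm M.m else 1) * prm M.m ^ w1) *
          (((if e2 = -1 then prm (M.m + 1) else 1) * prm (M.m + 1) ^ w2) *
            (prm s' * prm q * (prm (M.m + 2) ^ (t + 1)))) := by rw [cnt1, cnt2]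
      _ = prm q * (if e1 = -1 then prm M.m else 1) * (if e2 = -1 then prm (M.m + 1) else 1) *
          (prm s' * prm M.m ^ w1 * prm (M.m + 1) ^ w2 * prm (M.m + 2) ^ (t + 1)) := by ring
  have hnumpos : 0 < num := by
    rw [hnum]
    exact Nat.mul_pos (Nat.mul_pos (Nat.mul_pos (prm_pos _) (prm_pos _))
      (if_pos_nat (prm_pos _))) (if_pos_nat (prm_pos _))
  have hdenpos : 0 < den := by
    rw [hden]
    exact Nat.mul_pos (Nat.mul_pos (prm_pos _) (if_pos_nat (prm_pos _))) (if_pos_nat (prm_pos _))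
  set γ := Nat.gcd num den with hγ
  have hγpos : 0 < γ := Nat.gcd_pos_of_pos_left _ hnumpos
  have hγnum : γ ∣ num := Nat.gcd_dvd_left _ _
  have hγden : γ ∣ den := Nat.gcd_dvd_right _ _
  have hripos : 0 < den / γ := Nat.div_pos (Nat.le_of_dvd hdenpos hγden) hγpos
  have key2 : (num / γ) * n = (den / γ) * n' := by
    apply Nat.eq_of_mul_eq_mul_left hγpos
    calc γ * (num / γ * n) = (γ * (num / γ)) * n := by ring
      _ = num * n := by rw [Nat.mul_div_cancel' hγnum]
      _ = den * n' := key
      _ = (γ * (den / γ)) * n' := by rw [Nat.mul_div_cancel' hγden]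
      _ = γ * (den / γ * n') := by ring
  rw [TCM.g, TCM.qi, TCM.ri, hqr]
  simp only []
  rw [key2, Nat.mul_div_cancel_left _ hripos]

lemma g_enc_stuck (M : TCM) (q v1 v2 t : ℕ) (hC : q < M.m)
    (hstep : M.step q (decide (v1 ≠ 0)) (decide (v2 ≠ 0)) = none) :
    M.g (M.enc (q, v1, v2, t)) = M.enc (q, v1, v2, t) := by
  have hqr := qr_enc_stuck M q v1 v2 t hC hstep
  rw [TCM.g, TCM.qi, TCM.ri, hqr]
  simp

lemma gIter_run (M : TCM) : ∀ k C, M.run k = some C → M.gIter k = M.enc C := by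
  intro k
  induction k with
  | zero =>
    intro C hC
    rw [TCM.run] at hC
    cases hC
    show (M.g)^[0] 2 = M.enc (0, 0, 0, 0)
    simp [TCM.enc, prm]
  | succ k ih =>
    intro C hC
    rw [TCM.run, Option.bind_eq_some_iff] at hC
    obtain ⟨C₀, h₀, hnext⟩ := hC
    obtain ⟨q, v1, v2, t⟩ := C₀
    have hC₀ : q < M.m := run_state_lt M k _ h₀
    rw [TCM.next] at hnext
    cases hstep : M.step q (decide (v1 ≠ 0)) (decide (v2 ≠ 0)) with
    | none => rw [hstep] at hnext; exact absurd hnext (by simp)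
    | some v =>
      obtain ⟨s', d1, d2⟩ := v
      rw [hstep] at hnext
      obtain ⟨e, he, hev⟩ := step_mem M hstep
      have hwf := M.wf e he
      have hd1 : d1.natAbs ≤ 1 := by rw [hev] at hwf; exact hwf.2.2.1
      have hd2 : d2.natAbs ≤ 1 := by rw [hev] at hwf; exact hwf.2.2.2
      rw [TCM.gIter, Function.iterate_succ_apply', ← TCM.gIter, ih _ h₀]
      cases hnext
      exact g_enc_move M q v1 v2 t hC₀ hstep hd1 hd2

lemma gIter_bounded (M : TCM) (hM : M.Halts) : ∃ N, ∀ k, M.gIter k ≤ N := by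
  obtain ⟨n₀, C, hrun, hnone⟩ := hM
  obtain ⟨q, v1, v2, t⟩ := C
  have hC : q < M.m := run_state_lt M n₀ _ hrun
  rw [TCM.next] at hnone
  have hstep : M.step q (decide (v1 ≠ 0)) (decide (v2 ≠ 0)) = none := by
    cases hstep : M.step q (decide (v1 ≠ 0)) (decide (v2 ≠ 0)) with
    | none => rfl
    | some v => rw [hstep] at hnone; obtain ⟨a, b, c⟩ := v; exact absurd hnone (by simp)
  have hfix : ∀ k, n₀ ≤ k → M.gIter k = M.enc (q, v1, v2, t) := by
    intro k hk
    induction k with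
    | zero =>
      have h0 : n₀ = 0 := by omega
      subst h0
      exact gIter_run M 0 _ hrun
    | succ k ih =>
      rcases Nat.lt_or_ge n₀ (k + 1) with h | h
      · have hik := ih (by omega)
        rw [TCM.gIter, Function.iterate_succ_apply', ← TCM.gIter, hik]
        exact g_enc_stuck M q v1 v2 t hC hstep
      · have h1 : n₀ = k + 1 := by omega
        subst h1
        exact gIter_run M _ _ hrun
  refine ⟨(Finset.range (n₀ + 1)).sup M.gIter, fun k => ?_⟩
  rcases Nat.lt_or_ge k (n₀ + 1) with h | h
  · exact Finset.le_sup (Finset.mem_range.2 h)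
  · rw [hfix k (by omega), ← gIter_run M n₀ _ hrun]
    exact Finset.le_sup (Finset.mem_range.2 (by omega))

lemma ri_pos (M : TCM) (i : ℕ) : 0 < M.ri i := by
  rw [TCM.ri, TCM.qr]
  cases M.stateOf i with
  | none => exact one_pos
  | some s =>
    simp only []
    cases M.step s (decide (prm M.m ∣ i)) (decide (prm (M.m + 1) ∣ i)) with
    | none => exact one_pos
    | some v =>
      obtain ⟨s', d1, d2⟩ := v
      simp only []
      have hdenpos : 0 < prm s *
          (if (if decide (prm M.m ∣ i) then d1 else max d1 0) = -1 then prm M.m else 1) *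
          (if (if decide (prm (M.m + 1) ∣ i) then d2 else max d2 0) = -1
            then prm (M.m + 1) else 1) :=
        Nat.mul_pos (Nat.mul_pos (prm_pos _) (if_pos_nat (prm_pos _))) (if_pos_nat (prm_pos _))
      exact Nat.div_pos (Nat.le_of_dvd hdenpos (Nat.gcd_dvd_right _ _))
        (Nat.gcd_pos_of_pos_right _ hdenpos)

end Stmt6
namespace Stmt6

/-! ### Part 2: the oblivious saturation -/

def Clos (M : TCM) (I : Set Atom) : ℕ → Set Atom
  | 0 => I
  | n + 1 => Clos M I n ∪
      {a | ∃ t : Trigger, t.rule ∈ RM M ∧ t.isOn (Clos M I n) ∧ a ∈ t.out}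

def CI (M : TCM) (I : Set Atom) : Set Atom := {a | ∃ n, a ∈ Clos M I n}

lemma Clos_mono_succ (M : TCM) (I : Set Atom) (n : ℕ) : Clos M I n ⊆ Clos M I (n + 1) :=
  Set.subset_union_left

lemma Clos_mono (M : TCM) (I : Set Atom) {n m : ℕ} (h : n ≤ m) : Clos M I n ⊆ Clos M I m := by
  induction m with
  | zero => cases Nat.le_zero.mp h; exact subset_rfl
  | succ m ih =>
    rcases Nat.lt_or_ge n (m + 1) with h' | h'
    · exact (ih (by omega)).trans (Clos_mono_succ M I m)
    · have : n = m + 1 := by omega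
      subst this; exact subset_rfl

lemma Clos_subset_CI (M : TCM) (I : Set Atom) (n : ℕ) : Clos M I n ⊆ CI M I :=
  fun a ha => ⟨n, ha⟩

lemma isOn_mono {t : Trigger} {J K : Set Atom} (h : J ⊆ K) (ht : t.isOn J) : t.isOn K :=
  fun a ha => h (ht a ha)

lemma inst_subset_Clos {M : TCM} {I : Finset Atom} (D : Deriv (RM M) (I : Set Atom)) :
    ∀ n, D.inst n ⊆ Clos M (I : Set Atom) n := by
  intro n
  induction n with
  | zero => exact subset_rfl
  | succ n ih =>
    show instSeq _ _ (n + 1) ⊆ _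
    rw [instSeq]
    cases hst : D.steps n with
    | none =>
      simp only [hst]
      exact fun a ha => by
        rcases ha with ha | ha
        · exact Clos_mono_succ M _ n (ih ha)
        · exact absurd ha (Set.notMem_empty a)
    | some t =>
      simp only [hst]
      rintro a (ha | ha)
      · exact Clos_mono_succ M _ n (ih ha)
      · obtain ⟨hrule, hon, -⟩ := D.valid n t hst
        exact Set.mem_union_right _ ⟨t, hrule, isOn_mono ih hon, ha⟩

lemma inst_mono {M : TCM} {I : Finset Atom} (D : Deriv (RM M) (I : Set Atom)) {n m : ℕ}
    (h : n ≤ m) : D.inst n ⊆ D.inst m := by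
  induction m with
  | zero => cases Nat.le_zero.mp h; exact subset_rfl
  | succ m ih =>
    rcases Nat.lt_or_ge n (m + 1) with h' | h'
    · refine (ih (by omega)).trans ?_
      show D.inst m ⊆ instSeq _ _ (m + 1)
      rw [instSeq]
      exact Set.subset_union_left
    · have : n = m + 1 := by omega
      subst this; exact subset_rfl

/-- If the saturation is finite, every derivation is finite. -/
lemma finite_of_CI_finite {M : TCM} {I : Finset Atom} (D : Deriv (RM M) (I : Set Atom))
    (hfin : (CI M (I : Set Atom)).Finite) : D.Finite := by
  by_contra hinf
  rw [Deriv.Finite] at hinf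
  push_neg at hinf
  have hstep : ∀ n, ∃ a, a ∈ D.inst (n + 1) ∧ a ∉ D.inst n := by
    intro n
    cases hst : D.steps n with
    | none => exact absurd hst (hinf n)
    | some t =>
      obtain ⟨-, -, hout⟩ := D.valid n t hst
      rw [Set.not_subset] at hout
      obtain ⟨a, ha, hna⟩ := hout
      refine ⟨a, ?_, hna⟩
      show a ∈ instSeq _ _ (n + 1)
      rw [instSeq, hst]
      exact Set.mem_union_right _ ha
  choose f hf1 hf2 using hstep
  have hinj : Function.Injective f := by
    intro n m hnm
    by_contra hne
    rcases Nat.lt_or_ge n m with h | h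
    · exact hf2 m (hnm ▸ inst_mono D (by omega) (hf1 n))
    · exact hf2 n (hnm ▸ inst_mono D (by omega) (hf1 m))
  have hrange : Set.range f ⊆ CI M (I : Set Atom) := by
    rintro a ⟨n, rfl⟩
    exact Clos_subset_CI M _ (n + 1) (inst_subset_Clos D (n + 1) (hf1 n))
  exact (Set.infinite_range_of_injective hinj) (hfin.subset hrange)

end Stmt6
namespace Stmt6

/-! ### Part 3: computing rule bodies and outputs -/

lemma mem_varsF {A : Finset Atom} {a : Atom} (ha : a ∈ A) {v : Var} (hv : Sum.inr v ∈ a.2) :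
    v ∈ varsF A :=
  Finset.mem_biUnion.2 ⟨a, ha, List.mem_toFinset.2 (List.mem_filterMap.2 ⟨Sum.inr v, hv, rfl⟩)⟩

lemma extSub_eq_sub {t : Trigger} {v : Var} (hv : v ∈ varsF t.rule.1) : t.extSub v = t.sub v :=
  if_pos hv

lemma mem_body {t : Trigger} {J : Set Atom} (hon : t.isOn J) {a : Atom} (ha : a ∈ t.rule.1) :
    applyA t.sub a ∈ J := hon a ha

/-- Rule (1). -/
lemma trig_ruleS {t : Trigger} {J : Set Atom} {a : Atom} (h : t.rule = ruleS)
    (hon : t.isOn J) (ha : a ∈ t.out) :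
    ∃ y0 y1, a = (pS, [y0, y1]) ∧ (pS0, [y0, y1]) ∈ J := by
  have h0 : (Sum.inl 0 : Var) ∈ varsF t.rule.1 := by
    rw [h]; exact mem_varsF (show (pS0, [vt 0, vt 1]) ∈ _ by simp [ruleS]) (by simp [vt])
  have h1 : (Sum.inl 1 : Var) ∈ varsF t.rule.1 := by
    rw [h]; exact mem_varsF (show (pS0, [vt 0, vt 1]) ∈ _ by simp [ruleS]) (by simp [vt])
  refine ⟨t.sub (Sum.inl 0), t.sub (Sum.inl 1), ?_, ?_⟩
  · rw [Trigger.out, h] at ha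
    simp only [ruleS, Finset.image_singleton, Finset.mem_singleton] at ha
    rw [ha]
    show (pS, [t.extSub (Sum.inl 0), t.extSub (Sum.inl 1)]) = _
    rw [extSub_eq_sub h0, extSub_eq_sub h1]
  · exact mem_body hon (show (pS0, [vt 0, vt 1]) ∈ t.rule.1 by rw [h]; simp [ruleS])

/-- Rule (4). -/
lemma trig_ruleFloodProp {t : Trigger} {J : Set Atom} {a : Atom} (h : t.rule = ruleFloodProp)
    (hon : t.isOn J) (ha : a ∈ t.out) :
    ∃ y0 y1, a = (pFlood, [y1]) ∧ (pS, [y0, y1]) ∈ J := by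
  have h1 : (Sum.inl 1 : Var) ∈ varsF t.rule.1 := by
    rw [h]
    exact mem_varsF (show (pS, [vt 0, vt 1]) ∈ _ by simp [ruleFloodProp]) (by simp [vt])
  refine ⟨t.sub (Sum.inl 0), t.sub (Sum.inl 1), ?_, ?_⟩
  · rw [Trigger.out, h] at ha
    simp only [ruleFloodProp, Finset.image_singleton, Finset.mem_singleton] at ha
    rw [ha]
    show (pFlood, [t.extSub (Sum.inl 1)]) = _
    rw [extSub_eq_sub h1]
  · exact mem_body hon (show (pS, [vt 0, vt 1]) ∈ t.rule.1 by rw [h]; simp [ruleFloodProp])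

/-- Rule (5). -/
lemma trig_ruleSEnd {t : Trigger} {J : Set Atom} {a : Atom} (h : t.rule = ruleSEnd)
    (hon : t.isOn J) (ha : a ∈ t.out) :
    ∃ y0, a = (pS, [y0, y0]) ∧ (pEnd, [y0]) ∈ J := by
  have h0 : (Sum.inl 0 : Var) ∈ varsF t.rule.1 := by
    rw [h]; exact mem_varsF (show (pEnd, [vt 0]) ∈ _ by simp [ruleSEnd]) (by simp [vt])
  refine ⟨t.sub (Sum.inl 0), ?_, ?_⟩
  · rw [Trigger.out, h] at ha
    simp only [ruleSEnd, Finset.image_singleton, Finset.mem_singleton] at ha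
    rw [ha]
    show (pS, [t.extSub (Sum.inl 0), t.extSub (Sum.inl 0)]) = _
    rw [extSub_eq_sub h0]
  · exact mem_body hon (show (pEnd, [vt 0]) ∈ t.rule.1 by rw [h]; simp [ruleSEnd])

/-- Rule (2). -/
lemma trig_ruleR {M : TCM} {i : ℕ} {t : Trigger} {J : Set Atom} {a : Atom}
    (h : t.rule = ruleR M i) (hon : t.isOn J) (ha : a ∈ t.out) :
    ∃ y0 y1 y2, a = (pR ((i + 1) % M.p), [y0, y2]) ∧ (pR i, [y0, y1]) ∈ J ∧
      (pS, [y1, y2]) ∈ J := by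
  have h0 : (Sum.inl 0 : Var) ∈ varsF t.rule.1 := by
    rw [h]; exact mem_varsF (show (pR i, [vt 0, vt 1]) ∈ _ by simp [ruleR]) (by simp [vt])
  have h2 : (Sum.inl 2 : Var) ∈ varsF t.rule.1 := by
    rw [h]; exact mem_varsF (show (pS, [vt 1, vt 2]) ∈ _ by simp [ruleR]) (by simp [vt])
  refine ⟨t.sub (Sum.inl 0), t.sub (Sum.inl 1), t.sub (Sum.inl 2), ?_, ?_, ?_⟩
  · rw [Trigger.out, h] at ha
    simp only [ruleR, Finset.image_singleton, Finset.mem_singleton] at ha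
    rw [ha]
    show (pR ((i + 1) % M.p), [t.extSub (Sum.inl 0), t.extSub (Sum.inl 2)]) = _
    rw [extSub_eq_sub h0, extSub_eq_sub h2]
  · exact mem_body hon (show (pR i, [vt 0, vt 1]) ∈ t.rule.1 by rw [h]; simp [ruleR])
  · exact mem_body hon (show (pS, [vt 1, vt 2]) ∈ t.rule.1 by rw [h]; simp [ruleR])

/-- Rule (7). -/
lemma trig_ruleGStep {i : ℕ} {t : Trigger} {J : Set Atom} {a : Atom}
    (h : t.rule = ruleGStep i) (hon : t.isOn J) (ha : a ∈ t.out) :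
    ∃ y0 y1 y2, a = (pG, [y0, y2]) ∧ (pG, [y0, y1]) ∈ J ∧ (pR i, [y0, y1]) ∈ J ∧
      (pT i, [y0, y1, y2]) ∈ J := by
  have h0 : (Sum.inl 0 : Var) ∈ varsF t.rule.1 := by
    rw [h]; exact mem_varsF (show (pG, [vt 0, vt 1]) ∈ _ by simp [ruleGStep]) (by simp [vt])
  have h2 : (Sum.inl 2 : Var) ∈ varsF t.rule.1 := by
    rw [h]
    exact mem_varsF (show (pT i, [vt 0, vt 1, vt 2]) ∈ _ by simp [ruleGStep]) (by simp [vt])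
  refine ⟨t.sub (Sum.inl 0), t.sub (Sum.inl 1), t.sub (Sum.inl 2), ?_, ?_, ?_, ?_⟩
  · rw [Trigger.out, h] at ha
    simp only [ruleGStep, Finset.image_singleton, Finset.mem_singleton] at ha
    rw [ha]
    show (pG, [t.extSub (Sum.inl 0), t.extSub (Sum.inl 2)]) = _
    rw [extSub_eq_sub h0, extSub_eq_sub h2]
  · exact mem_body hon (show (pG, [vt 0, vt 1]) ∈ t.rule.1 by rw [h]; simp [ruleGStep])
  · exact mem_body hon (show (pR i, [vt 0, vt 1]) ∈ t.rule.1 by rw [h]; simp [ruleGStep])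
  · exact mem_body hon
      (show (pT i, [vt 0, vt 1, vt 2]) ∈ t.rule.1 by rw [h]; simp [ruleGStep])

end Stmt6
namespace Stmt6

/-! ### spath lemmas -/

lemma pathVar_zero (a b base n : ℕ) : pathVar a b base n 0 = vt a := if_pos rfl

lemma pathVar_last {a b base n : ℕ} (hn : 0 < n) : pathVar a b base n n = vt b := by
  unfold pathVar
  rw [if_neg hn.ne', if_pos rfl]

lemma spath_SPath {σ : Subst} {J : Set Atom} {a b base n : ℕ} (hn : 0 < n)
    (h : ∀ x ∈ spath a b base n, applyA σ x ∈ J) :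
    SPath J n (σ (Sum.inl a)) (σ (Sum.inl b)) := by
  have key : ∀ k j, j + k = n → SPath J k (applyT σ (pathVar a b base n j))
      (applyT σ (pathVar a b base n n)) := by
    intro k
    induction k with
    | zero =>
      intro j hj
      have : j = n := by omega
      subst this
      rfl
    | succ k ih =>
      intro j hj
      refine ⟨applyT σ (pathVar a b base n (j + 1)), ?_, ih (j + 1) (by omega)⟩
      have hmem : (pS, [pathVar a b base n j, pathVar a b base n (j + 1)]) ∈ spath a b base n :=
        Finset.mem_image.2 ⟨j, Finset.mem_range.2 (by omega), rfl⟩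
      exact h _ hmem
  have h0 := key n 0 (by omega)
  rw [pathVar_zero, pathVar_last hn] at h0
  exact h0

lemma mem_spath_vars_left {a b base n : ℕ} (hn : 0 < n) :
    (Sum.inl a : Var) ∈ varsF (spath a b base n) := by
  refine mem_varsF (Finset.mem_image.2 ⟨0, Finset.mem_range.2 hn, rfl⟩) ?_
  rw [pathVar_zero]
  simp [vt]

lemma mem_spath_vars_right {a b base n : ℕ} (hn : 0 < n) :
    (Sum.inl b : Var) ∈ varsF (spath a b base n) := by
  refine mem_varsF (Finset.mem_image.2 ⟨n - 1, Finset.mem_range.2 (by omega), rfl⟩) ?_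
  have : n - 1 + 1 = n := by omega
  rw [this, pathVar_last hn]
  simp [vt]

/-- Rule (6). -/
lemma trig_ruleGInit {t : Trigger} {J : Set Atom} {a : Atom} (h : t.rule = ruleGInit)
    (hon : t.isOn J) (ha : a ∈ t.out) :
    ∃ y0 y1, a = (pG, [y0, y1]) ∧ SPath J 2 y0 y1 := by
  have h0 : (Sum.inl 0 : Var) ∈ varsF t.rule.1 := by
    rw [h]; exact mem_spath_vars_left (by omega)
  have h1 : (Sum.inl 1 : Var) ∈ varsF t.rule.1 := by
    rw [h]; exact mem_spath_vars_right (by omega)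
  refine ⟨t.sub (Sum.inl 0), t.sub (Sum.inl 1), ?_, ?_⟩
  · rw [Trigger.out, h] at ha
    simp only [ruleGInit, Finset.image_singleton, Finset.mem_singleton] at ha
    rw [ha]
    show (pG, [t.extSub (Sum.inl 0), t.extSub (Sum.inl 1)]) = _
    rw [extSub_eq_sub h0, extSub_eq_sub h1]
  · refine spath_SPath (base := 10) (by omega) ?_
    intro x hx
    exact mem_body hon (show x ∈ t.rule.1 by rw [h]; exact hx)

lemma qi_pos (M : TCM) (i : ℕ) : 0 < M.qi i := by
  rw [TCM.qi, TCM.qr]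
  cases M.stateOf i with
  | none => exact one_pos
  | some s =>
    simp only []
    cases M.step s (decide (prm M.m ∣ i)) (decide (prm (M.m + 1) ∣ i)) with
    | none => exact one_pos
    | some v =>
      obtain ⟨s', d1, d2⟩ := v
      simp only []
      have hnumpos : 0 < prm s' * prm (M.m + 2) *
          (if (if decide (prm M.m ∣ i) then d1 else max d1 0) = 1 then prm M.m else 1) *
          (if (if decide (prm (M.m + 1) ∣ i) then d2 else max d2 0) = 1
            then prm (M.m + 1) else 1) :=
        Nat.mul_pos (Nat.mul_pos (Nat.mul_pos (prm_pos _) (prm_pos _))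
          (if_pos_nat (prm_pos _))) (if_pos_nat (prm_pos _))
      exact Nat.div_pos (Nat.le_of_dvd hnumpos (Nat.gcd_dvd_left _ _))
        (Nat.gcd_pos_of_pos_left _ hnumpos)

/-- Rule (3). -/
lemma trig_ruleT {M : TCM} {i : ℕ} {t : Trigger} {J : Set Atom} {a : Atom}
    (h : t.rule = ruleT M i) (hon : t.isOn J) (ha : a ∈ t.out) :
    ∃ y0 y1 y2 y3 y4, a = (pT i, [y0, y3, y4]) ∧ (pT i, [y0, y1, y2]) ∈ J ∧
      SPath J (M.ri i) y1 y3 ∧ SPath J (M.qi i) y2 y4 := by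
  have hT : (pT i, [vt 0, vt 1, vt 2]) ∈ t.rule.1 := by
    rw [h]
    simp only [ruleT, Finset.mem_union]
    left; left; simp
  have hsp1 : spath 1 3 10 (M.ri i) ⊆ t.rule.1 := by
    rw [h]
    intro x hx
    simp only [ruleT, Finset.mem_union]
    left; right; exact hx
  have hsp2 : spath 2 4 (11 + M.ri i) (M.qi i) ⊆ t.rule.1 := by
    rw [h]
    intro x hx
    simp only [ruleT, Finset.mem_union]
    right; exact hx
  have h0 : (Sum.inl 0 : Var) ∈ varsF t.rule.1 := mem_varsF hT (by simp [vt])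
  have h3 : (Sum.inl 3 : Var) ∈ varsF t.rule.1 := by
    refine mem_varsF (hsp1 (Finset.mem_image.2 ⟨M.ri i - 1, Finset.mem_range.2 (by
      have := ri_pos M i; omega), rfl⟩)) ?_
    have he : M.ri i - 1 + 1 = M.ri i := by have := ri_pos M i; omega
    rw [he, pathVar_last (ri_pos M i)]
    simp [vt]
  have h4 : (Sum.inl 4 : Var) ∈ varsF t.rule.1 := by
    refine mem_varsF (hsp2 (Finset.mem_image.2 ⟨M.qi i - 1, Finset.mem_range.2 (by
      have := qi_pos M i; omega), rfl⟩)) ?_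
    have he : M.qi i - 1 + 1 = M.qi i := by have := qi_pos M i; omega
    rw [he, pathVar_last (qi_pos M i)]
    simp [vt]
  refine ⟨t.sub (Sum.inl 0), t.sub (Sum.inl 1), t.sub (Sum.inl 2), t.sub (Sum.inl 3),
    t.sub (Sum.inl 4), ?_, ?_, ?_, ?_⟩
  · rw [Trigger.out, h] at ha
    simp only [ruleT, Finset.image_singleton, Finset.mem_singleton] at ha
    rw [ha]
    show (pT i, [t.extSub (Sum.inl 0), t.extSub (Sum.inl 3), t.extSub (Sum.inl 4)]) = _
    rw [extSub_eq_sub h0, extSub_eq_sub h3, extSub_eq_sub h4]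
  · exact mem_body hon hT
  · exact spath_SPath (ri_pos M i) fun x hx => mem_body hon (hsp1 hx)
  · exact spath_SPath (qi_pos M i) fun x hx => mem_body hon (hsp2 hx)

/-- Rule (8). -/
lemma trig_ruleFloodGen {M : TCM} {t : Trigger} {J : Set Atom} {a : Atom}
    (h : t.rule = ruleFloodGen M) (hon : t.isOn J) (ha : a ∈ t.out) :
    ∃ y0 y1 y2, (pFlood, [y0]) ∈ J ∧ (pFlood, [y1]) ∈ J ∧ (pFlood, [y2]) ∈ J ∧
      (a = (pG, [y0, y1]) ∨ ∃ j < M.p, a = (pR j, [y0, y1]) ∨ a = (pT j, [y0, y1, y2])) := by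
  have h0 : (Sum.inl 0 : Var) ∈ varsF t.rule.1 := by
    rw [h]; exact mem_varsF (show (pFlood, [vt 0]) ∈ _ by simp [ruleFloodGen]) (by simp [vt])
  have h1 : (Sum.inl 1 : Var) ∈ varsF t.rule.1 := by
    rw [h]; exact mem_varsF (show (pFlood, [vt 1]) ∈ _ by simp [ruleFloodGen]) (by simp [vt])
  have h2 : (Sum.inl 2 : Var) ∈ varsF t.rule.1 := by
    rw [h]; exact mem_varsF (show (pFlood, [vt 2]) ∈ _ by simp [ruleFloodGen]) (by simp [vt])
  refine ⟨t.sub (Sum.inl 0), t.sub (Sum.inl 1), t.sub (Sum.inl 2), ?_, ?_, ?_, ?_⟩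
  · exact mem_body hon (show (pFlood, [vt 0]) ∈ t.rule.1 by rw [h]; simp [ruleFloodGen])
  · exact mem_body hon (show (pFlood, [vt 1]) ∈ t.rule.1 by rw [h]; simp [ruleFloodGen])
  · exact mem_body hon (show (pFlood, [vt 2]) ∈ t.rule.1 by rw [h]; simp [ruleFloodGen])
  · rw [Trigger.out, h] at ha
    obtain ⟨b, hb, hab⟩ := Finset.mem_image.1 ha
    simp only [ruleFloodGen, Finset.mem_union, Finset.mem_singleton, Finset.mem_biUnion,
      Finset.mem_range, Finset.mem_insert] at hb
    rcases hb with rfl | ⟨j, hj, rfl | rfl⟩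
    · left
      rw [← hab]
      show (pG, [t.extSub (Sum.inl 0), t.extSub (Sum.inl 1)]) = _
      rw [extSub_eq_sub h0, extSub_eq_sub h1]
    · right
      refine ⟨j, hj, Or.inl ?_⟩
      rw [← hab]
      show (pR j, [t.extSub (Sum.inl 0), t.extSub (Sum.inl 1)]) = _
      rw [extSub_eq_sub h0, extSub_eq_sub h1]
    · right
      refine ⟨j, hj, Or.inr ?_⟩
      rw [← hab]
      show (pT j, [t.extSub (Sum.inl 0), t.extSub (Sum.inl 1), t.extSub (Sum.inl 2)]) = _
      rw [extSub_eq_sub h0, extSub_eq_sub h1, extSub_eq_sub h2]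

end Stmt6
namespace Stmt6

/-! ### Rule (9) and the fresh nulls -/

lemma varsF_ruleEx (M : TCM) : varsF (ruleEx M).1 = {Sum.inl 1, Sum.inl 2} := by
  apply Finset.ext
  intro v
  simp only [ruleEx, varsF, atomVarsF, Finset.mem_biUnion, Finset.mem_insert,
    Finset.mem_singleton, List.mem_toFinset, List.mem_filterMap]
  constructor
  · rintro ⟨b, rfl | rfl, x, hx, hgx⟩
    · simp only [vt, List.mem_cons, List.not_mem_nil, or_false] at hx
      rcases hx with rfl | rfl
      · left; simpa using hgx.symm
      · right; simpa using hgx.symm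
    · simp only [vt, List.mem_cons, List.not_mem_nil, or_false] at hx
      rcases hx with rfl
      right; simpa using hgx.symm
  · rintro (rfl | rfl)
    · exact ⟨(pG, [vt 1, vt 2]), Or.inl rfl, vt 1, by simp [vt], rfl⟩
    · exact ⟨(pG, [vt 1, vt 2]), Or.inl rfl, vt 2, by simp [vt], rfl⟩

def codeEx (M : TCM) (y z : FTerm) : ℕ :=
  Encodable.encode (ruleEx M, ({(Sum.inl 1, y), (Sum.inl 2, z)} : Finset (Var × FTerm)))

def nu (M : TCM) (y z : FTerm) : FTerm :=
  Sum.inr (Sum.inr (codeEx M y z, Encodable.encode (Sum.inl 0 : Var)))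

lemma code_ruleEx {M : TCM} {t : Trigger} (h : t.rule = ruleEx M) :
    t.code = codeEx M (t.sub (Sum.inl 1)) (t.sub (Sum.inl 2)) := by
  rw [Trigger.code, h, varsF_ruleEx, codeEx, Finset.image_insert, Finset.image_singleton]

lemma extSub_ruleEx_ex {M : TCM} {t : Trigger} (h : t.rule = ruleEx M) :
    t.extSub (Sum.inl 0) = nu M (t.sub (Sum.inl 1)) (t.sub (Sum.inl 2)) := by
  show (if (Sum.inl 0 : Var) ∈ varsF t.rule.1 then _ else _) = _
  rw [h, varsF_ruleEx, if_neg (by simp), nu, code_ruleEx h]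

lemma nu_inj {M : TCM} {y z y' z' : FTerm} (h : nu M y z = nu M y' z') : y = y' ∧ z = z' := by
  rw [nu, nu] at h
  have hcode : codeEx M y z = codeEx M y' z' := by
    injection h with h'
    injection h' with h''
    exact congrArg Prod.fst h''
  rw [codeEx, codeEx] at hcode
  have hpair := Encodable.encode_injective hcode
  have hfs : ({(Sum.inl 1, y), (Sum.inl 2, z)} : Finset (Var × FTerm)) =
      {(Sum.inl 1, y'), (Sum.inl 2, z')} := by
    injection hpair
  constructor
  · have hy : ((Sum.inl 1 : Var), y) ∈ ({(Sum.inl 1, y'), (Sum.inl 2, z')} :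
        Finset (Var × FTerm)) := by
      rw [← hfs]; simp
    simp only [Finset.mem_insert, Finset.mem_singleton, Prod.mk.injEq] at hy
    rcases hy with ⟨-, hy⟩ | ⟨h12, -⟩
    · exact hy
    · exact absurd h12 (by simp)
  · have hz : ((Sum.inl 2 : Var), z) ∈ ({(Sum.inl 1, y'), (Sum.inl 2, z')} :
        Finset (Var × FTerm)) := by
      rw [← hfs]; simp
    simp only [Finset.mem_insert, Finset.mem_singleton, Prod.mk.injEq] at hz
    rcases hz with ⟨h21, -⟩ | ⟨-, hz⟩
    · exact absurd h21 (by simp)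
    · exact hz

/-- Rule (9). -/
lemma trig_ruleEx {M : TCM} {t : Trigger} {J : Set Atom} {a : Atom} (h : t.rule = ruleEx M)
    (hon : t.isOn J) (ha : a ∈ t.out) :
    ∃ y1 y2, (pG, [y1, y2]) ∈ J ∧ (pEnd, [y2]) ∈ J ∧
      (a = (pS0, [nu M y1 y2, y1]) ∨ a = (pR 0, [nu M y1 y2, nu M y1 y2]) ∨
        ∃ j < M.p, a = (pT j, [nu M y1 y2, nu M y1 y2, nu M y1 y2])) := by
  have h1 : (Sum.inl 1 : Var) ∈ varsF t.rule.1 := by rw [h, varsF_ruleEx]; simp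
  have hex := extSub_ruleEx_ex h
  refine ⟨t.sub (Sum.inl 1), t.sub (Sum.inl 2), ?_, ?_, ?_⟩
  · exact mem_body hon (show (pG, [vt 1, vt 2]) ∈ t.rule.1 by rw [h]; simp [ruleEx])
  · exact mem_body hon (show (pEnd, [vt 2]) ∈ t.rule.1 by rw [h]; simp [ruleEx])
  · rw [Trigger.out, h] at ha
    obtain ⟨b, hb, hab⟩ := Finset.mem_image.1 ha
    simp only [ruleEx, Finset.mem_union, Finset.mem_insert, Finset.mem_singleton,
      Finset.mem_biUnion, Finset.mem_range] at hb
    rcases hb with (rfl | rfl) | ⟨j, hj, rfl⟩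
    · left
      rw [← hab]
      show (pS0, [t.extSub (Sum.inl 0), t.extSub (Sum.inl 1)]) = _
      rw [extSub_eq_sub h1, hex]
    · right; left
      rw [← hab]
      show (pR 0, [t.extSub (Sum.inl 0), t.extSub (Sum.inl 0)]) = _
      rw [hex]
    · right; right
      refine ⟨j, hj, ?_⟩
      rw [← hab]
      show (pT j, [t.extSub (Sum.inl 0), t.extSub (Sum.inl 0), t.extSub (Sum.inl 0)]) = _
      rw [hex]

lemma mem_RM_iff {M : TCM} {R : Rule} : R ∈ RM M ↔
    R = ruleS ∨ R = ruleFloodProp ∨ R = ruleSEnd ∨ R = ruleGInit ∨ R = ruleFloodGen M ∨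
    R = ruleEx M ∨ ∃ i < M.p, R = ruleR M i ∨ R = ruleT M i ∨ R = ruleGStep i := by
  simp only [RM, Finset.mem_union, Finset.mem_insert, Finset.mem_singleton, Finset.mem_biUnion,
    Finset.mem_range]
  constructor
  · rintro ((h|h|h|h|h|h) | ⟨i, hi, (h|h|h)⟩)
    · exact Or.inl h
    · exact Or.inr (Or.inl h)
    · exact Or.inr (Or.inr (Or.inl h))
    · exact Or.inr (Or.inr (Or.inr (Or.inl h)))
    · exact Or.inr (Or.inr (Or.inr (Or.inr (Or.inl h))))
    · exact Or.inr (Or.inr (Or.inr (Or.inr (Or.inr (Or.inl h)))))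
    · exact Or.inr (Or.inr (Or.inr (Or.inr (Or.inr (Or.inr ⟨i, hi, Or.inl h⟩)))))
    · exact Or.inr (Or.inr (Or.inr (Or.inr (Or.inr (Or.inr ⟨i, hi, Or.inr (Or.inl h)⟩)))))
    · exact Or.inr (Or.inr (Or.inr (Or.inr (Or.inr (Or.inr ⟨i, hi, Or.inr (Or.inr h)⟩)))))
  · rintro (h|h|h|h|h|h|⟨i, hi, (h|h|h)⟩)
    · exact Or.inl (Or.inl h)
    · exact Or.inl (Or.inr (Or.inl h))
    · exact Or.inl (Or.inr (Or.inr (Or.inl h)))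
    · exact Or.inl (Or.inr (Or.inr (Or.inr (Or.inl h))))
    · exact Or.inl (Or.inr (Or.inr (Or.inr (Or.inr (Or.inl h)))))
    · exact Or.inl (Or.inr (Or.inr (Or.inr (Or.inr (Or.inr h)))))
    · exact Or.inr ⟨i, hi, Or.inl h⟩
    · exact Or.inr ⟨i, hi, Or.inr (Or.inl h)⟩
    · exact Or.inr ⟨i, hi, Or.inr (Or.inr h)⟩

end Stmt6
namespace Stmt6

/-! ### The master case analysis for newly derived atoms -/

lemma new_atom_cases {M : TCM} {I : Set Atom} {n : ℕ} {a : Atom} (ha : a ∈ Clos M I (n + 1)) :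
    a ∈ Clos M I n ∨
    (∃ y0 y1, a = (pS, [y0, y1]) ∧ (pS0, [y0, y1]) ∈ Clos M I n) ∨
    (∃ y0 y1, a = (pFlood, [y1]) ∧ (pS, [y0, y1]) ∈ Clos M I n) ∨
    (∃ y0, a = (pS, [y0, y0]) ∧ (pEnd, [y0]) ∈ Clos M I n) ∨
    (∃ y0 y1, a = (pG, [y0, y1]) ∧ SPath (Clos M I n) 2 y0 y1) ∨
    (∃ i < M.p, ∃ y0 y1 y2, a = (pR ((i + 1) % M.p), [y0, y2]) ∧
      (pR i, [y0, y1]) ∈ Clos M I n ∧ (pS, [y1, y2]) ∈ Clos M I n) ∨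
    (∃ i < M.p, ∃ y0 y1 y2 y3 y4, a = (pT i, [y0, y3, y4]) ∧
      (pT i, [y0, y1, y2]) ∈ Clos M I n ∧ SPath (Clos M I n) (M.ri i) y1 y3 ∧
      SPath (Clos M I n) (M.qi i) y2 y4) ∨
    (∃ i < M.p, ∃ y0 y1 y2, a = (pG, [y0, y2]) ∧ (pG, [y0, y1]) ∈ Clos M I n ∧
      (pR i, [y0, y1]) ∈ Clos M I n ∧ (pT i, [y0, y1, y2]) ∈ Clos M I n) ∨
    (∃ y0 y1 y2, (pFlood, [y0]) ∈ Clos M I n ∧ (pFlood, [y1]) ∈ Clos M I n ∧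
      (pFlood, [y2]) ∈ Clos M I n ∧
      (a = (pG, [y0, y1]) ∨ ∃ j < M.p, a = (pR j, [y0, y1]) ∨ a = (pT j, [y0, y1, y2]))) ∨
    (∃ y1 y2, (pG, [y1, y2]) ∈ Clos M I n ∧ (pEnd, [y2]) ∈ Clos M I n ∧
      (a = (pS0, [nu M y1 y2, y1]) ∨ a = (pR 0, [nu M y1 y2, nu M y1 y2]) ∨
        ∃ j < M.p, a = (pT j, [nu M y1 y2, nu M y1 y2, nu M y1 y2]))) := by
  rcases ha with ha | ⟨t, hrule, hon, hout⟩
  · exact Or.inl ha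
  rcases mem_RM_iff.1 hrule with h | h | h | h | h | h | ⟨i, hi, h | h | h⟩
  · obtain ⟨y0, y1, h1, h2⟩ := trig_ruleS h hon hout
    exact Or.inr (Or.inl ⟨y0, y1, h1, h2⟩)
  · obtain ⟨y0, y1, h1, h2⟩ := trig_ruleFloodProp h hon hout
    exact Or.inr (Or.inr (Or.inl ⟨y0, y1, h1, h2⟩))
  · obtain ⟨y0, h1, h2⟩ := trig_ruleSEnd h hon hout
    exact Or.inr (Or.inr (Or.inr (Or.inl ⟨y0, h1, h2⟩)))
  · obtain ⟨y0, y1, h1, h2⟩ := trig_ruleGInit h hon hout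
    exact Or.inr (Or.inr (Or.inr (Or.inr (Or.inl ⟨y0, y1, h1, h2⟩))))
  · obtain ⟨y0, y1, y2, h1, h2, h3, h4⟩ := trig_ruleFloodGen h hon hout
    exact Or.inr (Or.inr (Or.inr (Or.inr (Or.inr (Or.inr (Or.inr (Or.inr (Or.inl
      ⟨y0, y1, y2, h1, h2, h3, h4⟩))))))))
  · obtain ⟨y1, y2, h1, h2, h3⟩ := trig_ruleEx h hon hout
    exact Or.inr (Or.inr (Or.inr (Or.inr (Or.inr (Or.inr (Or.inr (Or.inr (Or.inr
      ⟨y1, y2, h1, h2, h3⟩))))))))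
  · obtain ⟨y0, y1, y2, h1, h2, h3⟩ := trig_ruleR h hon hout
    exact Or.inr (Or.inr (Or.inr (Or.inr (Or.inr (Or.inl ⟨i, hi, y0, y1, y2, h1, h2, h3⟩)))))
  · obtain ⟨y0, y1, y2, y3, y4, h1, h2, h3, h4⟩ := trig_ruleT h hon hout
    exact Or.inr (Or.inr (Or.inr (Or.inr (Or.inr (Or.inr (Or.inl
      ⟨i, hi, y0, y1, y2, y3, y4, h1, h2, h3, h4⟩))))))
  · obtain ⟨y0, y1, y2, h1, h2, h3, h4⟩ := trig_ruleGStep h hon hout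
    exact Or.inr (Or.inr (Or.inr (Or.inr (Or.inr (Or.inr (Or.inr (Or.inl
      ⟨i, hi, y0, y1, y2, h1, h2, h3, h4⟩)))))))

/-- `End` atoms only come from the instance. -/
lemma end_inv {M : TCM} {I : Set Atom} : ∀ {n : ℕ} {l : List FTerm},
    (pEnd, l) ∈ Clos M I n → (pEnd, l) ∈ I := by
  intro n
  induction n with
  | zero => exact fun h => h
  | succ n ih =>
    intro l h
    rcases new_atom_cases h with h | ⟨y0, y1, he, -⟩ | ⟨y0, y1, he, -⟩ | ⟨y0, he, -⟩ |
      ⟨y0, y1, he, -⟩ | ⟨i, hi, y0, y1, y2, he, -⟩ | ⟨i, hi, y0, y1, y2, y3, y4, he, -⟩ |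
      ⟨i, hi, y0, y1, y2, he, -⟩ | ⟨y0, y1, y2, -, -, -, he⟩ | ⟨y1, y2, -, -, he⟩
    · exact ih h
    · simp [pEnd, pS, Prod.ext_iff] at he
    · simp [pEnd, pFlood, Prod.ext_iff] at he
    · simp [pEnd, pS, Prod.ext_iff] at he
    · simp [pEnd, pG, Prod.ext_iff] at he
    · exfalso
      have := congrArg Prod.fst he
      simp [pEnd, pR] at this
      omega
    · exfalso
      have := congrArg Prod.fst he
      simp [pEnd, pT] at this
      omega
    · simp [pEnd, pG, Prod.ext_iff] at he
    · exfalso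
      rcases he with he | ⟨j, hj, he | he⟩ <;> have := congrArg Prod.fst he <;>
        simp [pEnd, pG, pR, pT] at this <;> omega
    · exfalso
      rcases he with he | he | ⟨j, hj, he⟩ <;> have := congrArg Prod.fst he <;>
        simp [pEnd, pS0, pR, pT] at this <;> omega

end Stmt6
namespace Stmt6

/-! ### SPath utilities -/

lemma SPath_mono {J K : Set Atom} (h : J ⊆ K) : ∀ {k s t}, SPath J k s t → SPath K k s t := by
  intro k
  induction k with
  | zero => exact fun hp => hp
  | succ k ih =>
    rintro s t ⟨u, hu, hp⟩
    exact ⟨u, h hu, ih hp⟩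

lemma SPath_concat {J : Set Atom} : ∀ {k l s t r}, SPath J k s t → SPath J l t r →
    SPath J (k + l) s r := by
  intro k
  induction k with
  | zero =>
    intro l s t r h1 h2
    rw [show s = t from h1]
    rw [Nat.zero_add]
    exact h2
  | succ k ih =>
    rintro l s t r ⟨u, hu, hp⟩ h2
    have he : k + 1 + l = (k + l) + 1 := by omega
    rw [he]
    exact ⟨u, hu, ih hp h2⟩

lemma SPath_single {J : Set Atom} {s t : FTerm} (h : (pS, [s, t]) ∈ J) : SPath J 1 s t :=
  ⟨t, h, rfl⟩

lemma mem_adom_of {J : Set Atom} {a : Atom} (ha : a ∈ J) {x : FTerm} (hx : x ∈ a.2) :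
    x ∈ adom J := ⟨a, ha, hx⟩

lemma SPath_right_adom {J : Set Atom} : ∀ {k s t}, SPath J k s t → 0 < k → t ∈ adom J := by
  intro k
  induction k with
  | zero => omega
  | succ k ih =>
    rintro s t ⟨u, hu, hp⟩ -
    rcases Nat.eq_zero_or_pos k with rfl | hk
    · rw [show u = t from hp] at hu
      exact mem_adom_of hu (by simp)
    · exact ih hp hk

lemma SPath_left_adom {J : Set Atom} {k s t : FTerm → Prop} : True := trivial

/-! ### Parent chains -/

def ChainP (M : TCM) (I : Set Atom) : ℕ → FTerm → Prop
  | 0, u => u ∈ adom I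
  | h + 1, u => u ∉ adom I ∧ ∃ y z, u = nu M y z ∧ (pG, [y, z]) ∈ CI M I ∧
      (pEnd, [z]) ∈ I ∧ ChainP M I h y

lemma chainP_unique {M : TCM} {I : Set Atom} : ∀ {h h' : ℕ} {u : FTerm},
    ChainP M I h u → ChainP M I h' u → h = h' := by
  intro h
  induction h with
  | zero =>
    intro h' u hc hc'
    cases h' with
    | zero => rfl
    | succ h' => exact absurd hc hc'.1
  | succ h ih =>
    intro h' u hc hc'
    cases h' with
    | zero => exact absurd hc' hc.1
    | succ h' =>
      obtain ⟨-, y, z, rfl, -, -, hy⟩ := hc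
      obtain ⟨-, y', z', he, -, -, hy'⟩ := hc'
      obtain ⟨rfl, -⟩ := nu_inj he
      rw [ih hy hy']

def par (M : TCM) (u : FTerm) : FTerm :=
  if h : ∃ y z, u = nu M y z then h.choose else u

lemma par_nu (M : TCM) (y z : FTerm) : par M (nu M y z) = y := by
  rw [par, dif_pos (⟨y, z, rfl⟩ : ∃ y' z', nu M y z = nu M y' z')]
  obtain ⟨z', hz⟩ := (⟨y, z, rfl⟩ : ∃ y' z', nu M y z = nu M y' z').choose_spec
  exact ((nu_inj hz).1).symm

def anc (M : TCM) (j : ℕ) (u : FTerm) : FTerm := (par M)^[j] u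

lemma anc_zero (M : TCM) (u : FTerm) : anc M 0 u = u := rfl

lemma anc_succ (M : TCM) (j : ℕ) (u : FTerm) : anc M (j + 1) u = anc M j (par M u) :=
  Function.iterate_succ_apply _ _ _

lemma chainP_pure {M : TCM} {I : Set Atom} {h : ℕ} {u : FTerm} (hh : 0 < h)
    (hc : ChainP M I h u) : u ∉ adom I := by
  cases h with
  | zero => omega
  | succ h => exact hc.1

lemma chainP_anc {M : TCM} {I : Set Atom} : ∀ {j h : ℕ} {u : FTerm}, ChainP M I h u →
    j ≤ h → ChainP M I (h - j) (anc M j u) := by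
  intro j
  induction j with
  | zero => intro h u hc _; exact hc
  | succ j ih =>
    intro h u hc hj
    cases h with
    | zero => omega
    | succ h =>
      obtain ⟨-, y, z, rfl, -, -, hy⟩ := hc
      rw [anc_succ, par_nu]
      have : h + 1 - (j + 1) = h - j := by omega
      rw [this]
      exact ih hy (by omega)

lemma anc_inj {M : TCM} {I : Set Atom} {h : ℕ} {u : FTerm} (hc : ChainP M I h u) {j j' : ℕ}
    (hj : j ≤ h) (hj' : j' ≤ h) (he : anc M j u = anc M j' u) : j = j' := by
  have c1 := chainP_anc hc hj
  have c2 := chainP_anc hc hj'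
  rw [he] at c1
  have := chainP_unique c1 c2
  omega

def htOf (M : TCM) (I : Set Atom) (u : FTerm) : ℕ :=
  if h : ∃ k, ChainP M I k u then h.choose else 0

lemma htOf_eq {M : TCM} {I : Set Atom} {h : ℕ} {u : FTerm} (hc : ChainP M I h u) :
    htOf M I u = h := by
  rw [htOf, dif_pos ⟨h, hc⟩]
  exact chainP_unique (⟨h, hc⟩ : ∃ k, ChainP M I k u).choose_spec hc

/-! ### Edge inversions -/

lemma s0_inv {M : TCM} {I : Set Atom} : ∀ {n : ℕ} {w u : FTerm},
    (pS0, [w, u]) ∈ Clos M I n → (pS0, [w, u]) ∈ I ∨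
    ∃ z, w = nu M u z ∧ (pG, [u, z]) ∈ Clos M I n ∧ (pEnd, [z]) ∈ I := by
  intro n
  induction n with
  | zero => exact fun h => Or.inl h
  | succ n ih =>
    intro w u h
    rcases new_atom_cases h with h | ⟨y0, y1, he, -⟩ | ⟨y0, y1, he, -⟩ | ⟨y0, he, -⟩ |
      ⟨y0, y1, he, -⟩ | ⟨i, hi, y0, y1, y2, he, -⟩ | ⟨i, hi, y0, y1, y2, y3, y4, he, -⟩ |
      ⟨i, hi, y0, y1, y2, he, -⟩ | ⟨y0, y1, y2, -, -, -, he⟩ | ⟨y1, y2, hG, hE, he⟩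
    · rcases ih h with h' | ⟨z, h1, h2, h3⟩
      · exact Or.inl h'
      · exact Or.inr ⟨z, h1, Clos_mono_succ M I n h2, h3⟩
    · exact absurd (congrArg Prod.fst he) (by simp only [pS0, pS]; omega)
    · exact absurd (congrArg Prod.fst he) (by simp only [pS0, pFlood]; omega)
    · exact absurd (congrArg Prod.fst he) (by simp only [pS0, pS]; omega)
    · exact absurd (congrArg Prod.fst he) (by simp only [pS0, pG]; omega)
    · exact absurd (congrArg Prod.fst he) (by simp only [pS0, pR]; omega)
    · exact absurd (congrArg Prod.fst he) (by simp only [pS0, pT]; omega)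
    · exact absurd (congrArg Prod.fst he) (by simp only [pS0, pG]; omega)
    · rcases he with he | ⟨j, hj, he | he⟩ <;>
        exact absurd (congrArg Prod.fst he) (by simp only [pS0, pG, pR, pT]; omega)
    · rcases he with he | he | ⟨j, hj, he⟩
      · rw [Prod.ext_iff] at he
        simp at he
        obtain ⟨rfl, rfl⟩ := he
        exact Or.inr ⟨y2, rfl, Clos_mono_succ M I n hG, end_inv hE⟩
      · exact absurd (congrArg Prod.fst he) (by simp only [pS0, pR]; omega)
      · exact absurd (congrArg Prod.fst he) (by simp only [pS0, pT]; omega)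

lemma s_inv {M : TCM} {I : Set Atom} : ∀ {n : ℕ} {w u : FTerm},
    (pS, [w, u]) ∈ Clos M I n → (pS, [w, u]) ∈ I ∨ (pS0, [w, u]) ∈ Clos M I n ∨
    (w = u ∧ (pEnd, [w]) ∈ I) := by
  intro n
  induction n with
  | zero => exact fun h => Or.inl h
  | succ n ih =>
    intro w u h
    rcases new_atom_cases h with h | ⟨y0, y1, he, hb⟩ | ⟨y0, y1, he, -⟩ | ⟨y0, he, hb⟩ |
      ⟨y0, y1, he, -⟩ | ⟨i, hi, y0, y1, y2, he, -⟩ | ⟨i, hi, y0, y1, y2, y3, y4, he, -⟩ |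
      ⟨i, hi, y0, y1, y2, he, -⟩ | ⟨y0, y1, y2, -, -, -, he⟩ | ⟨y1, y2, hG, hE, he⟩
    · rcases ih h with h' | h' | h'
      · exact Or.inl h'
      · exact Or.inr (Or.inl (Clos_mono_succ M I n h'))
      · exact Or.inr (Or.inr h')
    · rw [Prod.ext_iff] at he
      simp at he
      obtain ⟨rfl, rfl⟩ := he
      exact Or.inr (Or.inl (Clos_mono_succ M I n hb))
    · exact absurd (congrArg Prod.fst he) (by simp only [pS, pFlood]; omega)
    · rw [Prod.ext_iff] at he
      simp at he
      obtain ⟨rfl, rfl⟩ := he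
      exact Or.inr (Or.inr ⟨rfl, end_inv hb⟩)
    · exact absurd (congrArg Prod.fst he) (by simp only [pS, pG]; omega)
    · exact absurd (congrArg Prod.fst he) (by simp only [pS, pR]; omega)
    · exact absurd (congrArg Prod.fst he) (by simp only [pS, pT]; omega)
    · exact absurd (congrArg Prod.fst he) (by simp only [pS, pG]; omega)
    · rcases he with he | ⟨j, hj, he | he⟩ <;>
        exact absurd (congrArg Prod.fst he) (by simp only [pS, pG, pR, pT]; omega)
    · rcases he with he | he | ⟨j, hj, he⟩ <;>
        exact absurd (congrArg Prod.fst he) (by simp only [pS, pS0, pR, pT]; omega)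

lemma s_from_pure {M : TCM} {I : Set Atom} {n : ℕ} {u v : FTerm} (hu : u ∉ adom I)
    (h : (pS, [u, v]) ∈ Clos M I n) :
    ∃ z, u = nu M v z ∧ (pG, [v, z]) ∈ Clos M I n ∧ (pEnd, [z]) ∈ I := by
  rcases s_inv h with h' | h' | ⟨rfl, h'⟩
  · exact absurd (mem_adom_of h' (by simp)) hu
  · rcases s0_inv h' with h'' | h''
    · exact absurd (mem_adom_of h'' (by simp)) hu
    · exact h''
  · exact absurd (mem_adom_of h' (by simp)) hu

lemma s_to_pure {M : TCM} {I : Set Atom} {n : ℕ} {w u : FTerm} (hu : u ∉ adom I)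
    (h : (pS, [w, u]) ∈ Clos M I n) :
    ∃ z, w = nu M u z ∧ (pG, [u, z]) ∈ Clos M I n ∧ (pEnd, [z]) ∈ I := by
  rcases s_inv h with h' | h' | ⟨rfl, h'⟩
  · exact absurd (mem_adom_of h' (by simp)) hu
  · rcases s0_inv h' with h'' | h''
    · exact absurd (mem_adom_of h'' (by simp)) hu
    · exact h''
  · exact absurd (mem_adom_of h' (by simp)) hu

end Stmt6
namespace Stmt6

/-! ### Walks from pure terms -/

def PJset (M : TCM) (I : Set Atom) : Set FTerm := {v | ∃ w ∈ adom I, ∃ ζ, w = nu M v ζ}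

/-- Walks of length at most the height are deterministic. -/
lemma walk_det {M : TCM} {I : Set Atom} : ∀ {s : ℕ} {h : ℕ} {x w : FTerm},
    ChainP M I h x → s ≤ h → SPath (CI M I) s x w → w = anc M s x := by
  intro s
  induction s with
  | zero => exact fun _ _ hp => hp.symm
  | succ s ih =>
    intro h x w hc hs hp
    obtain ⟨v, hedge, hp'⟩ := hp
    cases h with
    | zero => omega
    | succ h =>
      obtain ⟨hxp, y, z, hxeq, -, -, hy⟩ := hc
      obtain ⟨n, hen⟩ := hedge
      obtain ⟨z', hxz', -, -⟩ := s_from_pure hxp hen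
      have hvy : v = y := by
        rw [hxeq] at hxz'
        exact (nu_inj hxz').1.symm
      subst hvy
      rw [anc_succ, hxeq, par_nu]
      exact ih hy (by omega) hp'

/-- A walk ending at a term deeper than every `PJset` height descends a chain all the way. -/
lemma walk_to_deep {M : TCM} {I : Set Atom} {Hst : ℕ}
    (hH : ∀ v ∈ PJset M I, htOf M I v ≤ Hst) :
    ∀ {s : ℕ} {u w : FTerm} {hw : ℕ}, SPath (CI M I) s u w → w ∉ adom I →
      ChainP M I hw w → Hst < hw →
      ∃ hu, ChainP M I hu u ∧ w = anc M s u ∧ s + hw ≤ hu := by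
  intro s
  induction s with
  | zero =>
    intro u w hw hp hwp hcw hH'
    rw [show u = w from hp]
    exact ⟨hw, hcw, rfl, by omega⟩
  | succ s ih =>
    intro u w hw hp hwp hcw hH'
    obtain ⟨v, hedge, hp'⟩ := hp
    obtain ⟨hv, hcv, hanc, hle⟩ := ih hp' hwp hcw hH'
    have hvpos : 0 < hv := by omega
    have hvpure : v ∉ adom I := chainP_pure hvpos hcv
    obtain ⟨n, hen⟩ := hedge
    obtain ⟨z, hueq, hG, hE⟩ := s_to_pure hvpure hen
    by_cases hu : u ∈ adom I
    · exfalso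
      have hvPJ : v ∈ PJset M I := ⟨u, hu, z, hueq⟩
      have := hH v hvPJ
      rw [htOf_eq hcv] at this
      omega
    · refine ⟨hv + 1, ⟨hu, v, z, hueq, Clos_subset_CI M I n hG, hE, hcv⟩, ?_, by omega⟩
      rw [anc_succ, hueq, par_nu]
      exact hanc

end Stmt6
namespace Stmt6

lemma main_ind {M : TCM} {I : Set Atom} {N Hst : ℕ} (hN : ∀ k, M.gIter k ≤ N)
    (hH : ∀ v ∈ PJset M I, htOf M I v ≤ Hst) {h : ℕ} {x : FTerm}
    (hc : ChainP M I h x) (hB : N + Hst + 2 ≤ h) :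
    ∀ n : ℕ,
      (∀ u, (pG, [x, u]) ∈ Clos M I n → ∃ k, u = anc M (M.gIter k) x) ∧
      (∀ i u, (pR i, [x, u]) ∈ Clos M I n →
        ∃ d, d % M.p = i ∧ SPath (CI M I) d x u) ∧
      (∀ i u v, (pT i, [x, u, v]) ∈ Clos M I n →
        ∃ c, SPath (CI M I) (c * M.ri i) x u ∧ SPath (CI M I) (c * M.qi i) x v) ∧
      (¬ (pFlood, [x]) ∈ Clos M I n) := by
  have hxpure : x ∉ adom I := chainP_pure (by omega) hc
  intro n
  induction n using Nat.strong_induction_on with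
  | _ n IH =>
  cases n with
  | zero =>
    refine ⟨fun u hu => ?_, fun i u hu => ?_, fun i u v hu => ?_, fun hu => ?_⟩ <;>
      exact absurd (mem_adom_of hu (by simp)) hxpure
  | succ n =>
    have IHn := IH n (by omega)
    refine ⟨?_, ?_, ?_, ?_⟩
    · -- G atoms
      intro u hGa
      rcases new_atom_cases hGa with hcl | ⟨y0, y1, he, -⟩ | ⟨y0, y1, he, -⟩ | ⟨y0, he, -⟩ |
        ⟨y0, y1, he, hsp⟩ | ⟨i, hi, y0, y1, y2, he, -, -⟩ |
        ⟨i, hi, y0, y1, y2, y3, y4, he, -, -, -⟩ | ⟨i, hi, y0, y1, y2, he, hGb, hRb, hTb⟩ |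
        ⟨y0, y1, y2, hF0, hF1, hF2, hopt⟩ | ⟨y1, y2, hG9, hE9, hopt⟩
      · exact IHn.1 u hcl
      · exact absurd (congrArg Prod.fst he) (by simp only [pG, pS]; omega)
      · exact absurd (congrArg Prod.fst he) (by simp only [pG, pFlood]; omega)
      · exact absurd (congrArg Prod.fst he) (by simp only [pG, pS]; omega)
      · -- rule 6
        rw [Prod.ext_iff] at he
        simp at he
        obtain ⟨he1, he2⟩ := he
        subst he1; subst he2
        have hw := walk_det hc (show 2 ≤ h by omega)
          (SPath_mono (Clos_subset_CI M I n) hsp)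
        exact ⟨0, by rw [show M.gIter 0 = 2 from rfl]; exact hw⟩
      · exact absurd (congrArg Prod.fst he) (by simp only [pG, pR]; omega)
      · exact absurd (congrArg Prod.fst he) (by simp only [pG, pT]; omega)
      · -- rule 7
        rw [Prod.ext_iff] at he
        simp at he
        obtain ⟨he1, he2⟩ := he
        subst he1; subst he2
        obtain ⟨k, hky⟩ := IHn.1 y1 hGb
        have hgk : M.gIter k ≤ h := le_trans (hN k) (by omega)
        have hcy : ChainP M I (h - M.gIter k) y1 := by
          rw [hky]; exact chainP_anc hc hgk
        have hy1pure : y1 ∉ adom I := chainP_pure (by have := hN k; omega) hcy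
        obtain ⟨d, hdp, hdw⟩ := IHn.2.1 i y1 hRb
        obtain ⟨hu', hcu', hanc', hle'⟩ :=
          walk_to_deep hH hdw hy1pure hcy (by have := hN k; omega)
        have hu'h : hu' = h := chainP_unique hcu' hc
        have hdk : d = M.gIter k :=
          anc_inj hc (by omega) hgk (by rw [← hanc']; exact hky)
        obtain ⟨c, hc1, hc2⟩ := IHn.2.2.1 i y1 u hTb
        obtain ⟨hu2, hcu2, hanc2, hle2⟩ :=
          walk_to_deep hH hc1 hy1pure hcy (by have := hN k; omega)
        have hu2h : hu2 = h := chainP_unique hcu2 hc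
        have hck : c * M.ri i = M.gIter k :=
          anc_inj hc (by omega) hgk (by rw [← hanc2]; exact hky)
        have hmod : M.gIter k % M.p = i := by rw [← hdk]; exact hdp
        have hg1 : M.gIter (k + 1) = c * M.qi i := by
          rw [TCM.gIter, Function.iterate_succ_apply', ← TCM.gIter, TCM.g, hmod, ← hck]
          rw [show M.qi i * (c * M.ri i) = c * M.qi i * M.ri i by ring]
          exact Nat.mul_div_cancel _ (ri_pos M i)
        have hle3 : c * M.qi i ≤ h := by
          rw [← hg1]; exact le_trans (hN (k + 1)) (by omega)
        have hw := walk_det hc hle3 hc2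
        exact ⟨k + 1, by rw [hg1]; exact hw⟩
      · -- rule 8
        rcases hopt with he | ⟨j, hj, he | he⟩
        · rw [Prod.ext_iff] at he
          simp at he
          obtain ⟨he1, -⟩ := he
          subst he1
          exact absurd hF0 IHn.2.2.2
        · exact absurd (congrArg Prod.fst he) (by simp only [pG, pR]; omega)
        · exact absurd (congrArg Prod.fst he) (by simp only [pG, pT]; omega)
      · -- rule 9
        rcases hopt with he | he | ⟨j, hj, he⟩
        · exact absurd (congrArg Prod.fst he) (by simp only [pG, pS0]; omega)
        · exact absurd (congrArg Prod.fst he) (by simp only [pG, pR]; omega)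
        · exact absurd (congrArg Prod.fst he) (by simp only [pG, pT]; omega)
    · -- R atoms
      intro i u hRa
      rcases new_atom_cases hRa with hcl | ⟨y0, y1, he, -⟩ | ⟨y0, y1, he, -⟩ | ⟨y0, he, -⟩ |
        ⟨y0, y1, he, -⟩ | ⟨i0, hi0, y0, y1, y2, he, hRb, hSb⟩ |
        ⟨i0, hi0, y0, y1, y2, y3, y4, he, -, -, -⟩ | ⟨i0, hi0, y0, y1, y2, he, -, -, -⟩ |
        ⟨y0, y1, y2, hF0, hF1, hF2, hopt⟩ | ⟨y1, y2, hG9, hE9, hopt⟩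
      · exact IHn.2.1 i u hcl
      · exact absurd (congrArg Prod.fst he) (by simp only [pR, pS]; omega)
      · exact absurd (congrArg Prod.fst he) (by simp only [pR, pFlood]; omega)
      · exact absurd (congrArg Prod.fst he) (by simp only [pR, pS]; omega)
      · exact absurd (congrArg Prod.fst he) (by simp only [pR, pG]; omega)
      · -- rule 2
        have hfst := congrArg Prod.fst he
        simp only [pR] at hfst
        have hieq : i = (i0 + 1) % M.p := by omega
        have hsnd := congrArg Prod.snd he
        simp at hsnd
        obtain ⟨he1, he2⟩ := hsnd
        subst he1; subst he2
        obtain ⟨d, hdp, hdw⟩ := IHn.2.1 i0 y1 hRb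
        refine ⟨d + 1, ?_, SPath_concat hdw (SPath_single (Clos_subset_CI M I n hSb))⟩
        rw [hieq, Nat.add_mod d 1, Nat.add_mod i0 1, hdp, Nat.mod_eq_of_lt hi0]
      · exact absurd (congrArg Prod.fst he) (by simp only [pR, pT]; omega)
      · exact absurd (congrArg Prod.fst he) (by simp only [pR, pG]; omega)
      · -- rule 8
        rcases hopt with he | ⟨j, hj, he | he⟩
        · exact absurd (congrArg Prod.fst he) (by simp only [pR, pG]; omega)
        · rw [Prod.ext_iff] at he
          simp [pR] at he
          obtain ⟨-, he1, -⟩ := he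
          subst he1
          exact absurd hF0 IHn.2.2.2
        · exact absurd (congrArg Prod.fst he) (by simp only [pR, pT]; omega)
      · -- rule 9
        rcases hopt with he | he | ⟨j, hj, he⟩
        · exact absurd (congrArg Prod.fst he) (by simp only [pR, pS0]; omega)
        · have hfst := congrArg Prod.fst he
          simp only [pR] at hfst
          have hieq : i = 0 := by omega
          have hsnd := congrArg Prod.snd he
          simp at hsnd
          obtain ⟨he1, he2⟩ := hsnd
          refine ⟨0, by rw [hieq, Nat.zero_mod], ?_⟩
          show x = u
          rw [he1, he2]
        · exact absurd (congrArg Prod.fst he) (by simp only [pR, pT]; omega)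
    · -- T atoms
      intro i u v hTa
      rcases new_atom_cases hTa with hcl | ⟨y0, y1, he, -⟩ | ⟨y0, y1, he, -⟩ | ⟨y0, he, -⟩ |
        ⟨y0, y1, he, -⟩ | ⟨i0, hi0, y0, y1, y2, he, -, -⟩ |
        ⟨i0, hi0, y0, y1, y2, y3, y4, he, hTb, hsp1, hsp2⟩ |
        ⟨i0, hi0, y0, y1, y2, he, -, -, -⟩ |
        ⟨y0, y1, y2, hF0, hF1, hF2, hopt⟩ | ⟨y1, y2, hG9, hE9, hopt⟩
      · exact IHn.2.2.1 i u v hcl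
      · exact absurd (congrArg Prod.fst he) (by simp only [pT, pS]; omega)
      · exact absurd (congrArg Prod.fst he) (by simp only [pT, pFlood]; omega)
      · exact absurd (congrArg Prod.fst he) (by simp only [pT, pS]; omega)
      · exact absurd (congrArg Prod.fst he) (by simp only [pT, pG]; omega)
      · exact absurd (congrArg Prod.fst he) (by simp only [pT, pR]; omega)
      · -- rule 3
        have hfst := congrArg Prod.fst he
        simp only [pT] at hfst
        have hieq : i0 = i := by omega
        subst hieq
        have hsnd := congrArg Prod.snd he
        simp at hsnd
        obtain ⟨he1, he2, he3⟩ := hsnd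
        subst he1; subst he2; subst he3
        obtain ⟨c, hc1, hc2⟩ := IHn.2.2.1 i0 y1 y2 hTb
        refine ⟨c + 1, ?_, ?_⟩
        · rw [Nat.succ_mul]
          exact SPath_concat hc1 (SPath_mono (Clos_subset_CI M I n) hsp1)
        · rw [Nat.succ_mul]
          exact SPath_concat hc2 (SPath_mono (Clos_subset_CI M I n) hsp2)
      · exact absurd (congrArg Prod.fst he) (by simp only [pT, pG]; omega)
      · -- rule 8
        rcases hopt with he | ⟨j, hj, he | he⟩
        · exact absurd (congrArg Prod.fst he) (by simp only [pT, pG]; omega)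
        · exact absurd (congrArg Prod.fst he) (by simp only [pT, pR]; omega)
        · rw [Prod.ext_iff] at he
          simp [pT] at he
          obtain ⟨-, he1, -⟩ := he
          subst he1
          exact absurd hF0 IHn.2.2.2
      · -- rule 9
        rcases hopt with he | he | ⟨j, hj, he⟩
        · exact absurd (congrArg Prod.fst he) (by simp only [pT, pS0]; omega)
        · exact absurd (congrArg Prod.fst he) (by simp only [pT, pR]; omega)
        · have hsnd := congrArg Prod.snd he
          simp at hsnd
          obtain ⟨he1, he2, he3⟩ := hsnd
          refine ⟨0, ?_, ?_⟩
          · rw [Nat.zero_mul]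
            show x = u
            rw [he1, he2]
          · rw [Nat.zero_mul]
            show x = v
            rw [he1, he3]
    · -- Flood atoms
      intro hFa
      rcases new_atom_cases hFa with hcl | ⟨y0, y1, he, -⟩ | ⟨y0, y1, he, hSb⟩ | ⟨y0, he, -⟩ |
        ⟨y0, y1, he, -⟩ | ⟨i0, hi0, y0, y1, y2, he, -, -⟩ |
        ⟨i0, hi0, y0, y1, y2, y3, y4, he, -, -, -⟩ | ⟨i0, hi0, y0, y1, y2, he, -, -, -⟩ |
        ⟨y0, y1, y2, hF0, hF1, hF2, hopt⟩ | ⟨y1, y2, hG9, hE9, hopt⟩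
      · exact IHn.2.2.2 hcl
      · exact absurd (congrArg Prod.fst he) (by simp only [pFlood, pS]; omega)
      · -- rule 4
        rw [Prod.ext_iff] at he
        simp at he
        subst he
        obtain ⟨z, -, hG, hE⟩ := s_to_pure hxpure hSb
        obtain ⟨k, hkz⟩ := IHn.1 z hG
        have hgk : M.gIter k ≤ h := le_trans (hN k) (by omega)
        have hcz : ChainP M I (h - M.gIter k) z := by
          rw [hkz]; exact chainP_anc hc hgk
        have hzpure : z ∉ adom I := chainP_pure (by have := hN k; omega) hcz
        exact hzpure (mem_adom_of hE (by simp))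
      · exact absurd (congrArg Prod.fst he) (by simp only [pFlood, pS]; omega)
      · exact absurd (congrArg Prod.fst he) (by simp only [pFlood, pG]; omega)
      · exact absurd (congrArg Prod.fst he) (by simp only [pFlood, pR]; omega)
      · exact absurd (congrArg Prod.fst he) (by simp only [pFlood, pT]; omega)
      · exact absurd (congrArg Prod.fst he) (by simp only [pFlood, pG]; omega)
      · rcases hopt with he | ⟨j, hj, he | he⟩
        · exact absurd (congrArg Prod.fst he) (by simp only [pFlood, pG]; omega)
        · exact absurd (congrArg Prod.fst he) (by simp only [pFlood, pR]; omega)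
        · exact absurd (congrArg Prod.fst he) (by simp only [pFlood, pT]; omega)
      · rcases hopt with he | he | ⟨j, hj, he⟩
        · exact absurd (congrArg Prod.fst he) (by simp only [pFlood, pS0]; omega)
        · exact absurd (congrArg Prod.fst he) (by simp only [pFlood, pR]; omega)
        · exact absurd (congrArg Prod.fst he) (by simp only [pFlood, pT]; omega)

end Stmt6
namespace Stmt6

lemma nu_chain {M : TCM} {I : Set Atom} {n : ℕ} {y1 y2 : FTerm}
    (hG : (pG, [y1, y2]) ∈ Clos M I n) (hE : (pEnd, [y2]) ∈ Clos M I n)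
    (ihy : ∃ h, ChainP M I h y1) : ∃ h, ChainP M I h (nu M y1 y2) := by
  by_cases hpu : nu M y1 y2 ∈ adom I
  · exact ⟨0, hpu⟩
  · obtain ⟨hy, hcy⟩ := ihy
    exact ⟨hy + 1, hpu, y1, y2, rfl, Clos_subset_CI M I n hG, end_inv hE, hcy⟩

lemma adom_chain {M : TCM} {I : Set Atom} : ∀ {n : ℕ} {u : FTerm},
    u ∈ adom (Clos M I n) → ∃ h, ChainP M I h u := by
  intro n
  induction n with
  | zero => exact fun hu => ⟨0, hu⟩
  | succ n ih =>
    rintro u ⟨a, ha, hx⟩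
    rcases new_atom_cases ha with hcl | ⟨y0, y1, he, hb⟩ | ⟨y0, y1, he, hb⟩ | ⟨y0, he, hb⟩ |
      ⟨y0, y1, he, hsp⟩ | ⟨i, hi, y0, y1, y2, he, hb1, hb2⟩ |
      ⟨i, hi, y0, y1, y2, y3, y4, he, hb1, hsp1, hsp2⟩ | ⟨i, hi, y0, y1, y2, he, hb1, hb2, hb3⟩ |
      ⟨y0, y1, y2, hF0, hF1, hF2, hopt⟩ | ⟨y1, y2, hG9, hE9, hopt⟩
    · exact ih ⟨a, hcl, hx⟩
    · subst he
      simp only [List.mem_cons, List.not_mem_nil, or_false] at hx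
      rcases hx with rfl | rfl
      · exact ih (mem_adom_of hb (by simp))
      · exact ih (mem_adom_of hb (by simp))
    · subst he
      simp only [List.mem_cons, List.not_mem_nil, or_false] at hx
      rcases hx with rfl
      exact ih (mem_adom_of hb (by simp))
    · subst he
      simp only [List.mem_cons, List.not_mem_nil, or_false] at hx
      rcases hx with rfl | rfl <;> exact ih (mem_adom_of hb (by simp))
    · subst he
      simp only [List.mem_cons, List.not_mem_nil, or_false] at hx
      rcases hx with rfl | rfl
      · obtain ⟨v, hv, -⟩ := hsp
        exact ih (mem_adom_of hv (by simp))
      · exact ih (SPath_right_adom hsp (by omega))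
    · subst he
      simp only [List.mem_cons, List.not_mem_nil, or_false] at hx
      rcases hx with rfl | rfl
      · exact ih (mem_adom_of hb1 (by simp))
      · exact ih (mem_adom_of hb2 (by simp))
    · subst he
      simp only [List.mem_cons, List.not_mem_nil, or_false] at hx
      rcases hx with rfl | rfl | rfl
      · exact ih (mem_adom_of hb1 (by simp))
      · exact ih (SPath_right_adom hsp1 (ri_pos M i))
      · exact ih (SPath_right_adom hsp2 (qi_pos M i))
    · subst he
      simp only [List.mem_cons, List.not_mem_nil, or_false] at hx
      rcases hx with rfl | rfl
      · exact ih (mem_adom_of hb1 (by simp))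
      · exact ih (mem_adom_of hb3 (by simp))
    · rcases hopt with he | ⟨j, hj, he | he⟩ <;> subst he <;>
        simp only [List.mem_cons, List.not_mem_nil, or_false] at hx
      · rcases hx with rfl | rfl
        · exact ih (mem_adom_of hF0 (by simp))
        · exact ih (mem_adom_of hF1 (by simp))
      · rcases hx with rfl | rfl
        · exact ih (mem_adom_of hF0 (by simp))
        · exact ih (mem_adom_of hF1 (by simp))
      · rcases hx with rfl | rfl | rfl
        · exact ih (mem_adom_of hF0 (by simp))
        · exact ih (mem_adom_of hF1 (by simp))
        · exact ih (mem_adom_of hF2 (by simp))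
    · have ihy : ∃ h, ChainP M I h y1 := ih (mem_adom_of hG9 (by simp))
      rcases hopt with he | he | ⟨j, hj, he⟩ <;> subst he <;>
        simp only [List.mem_cons, List.not_mem_nil, or_false] at hx
      · rcases hx with rfl | rfl
        · exact nu_chain hG9 hE9 ihy
        · exact ihy
      · rcases hx with rfl | rfl <;> exact nu_chain hG9 hE9 ihy
      · rcases hx with rfl | rfl | rfl <;> exact nu_chain hG9 hE9 ihy

end Stmt6
namespace Stmt6

lemma adom_finite {J : Set Atom} (hJ : J.Finite) : (adom J).Finite := by
  have he : adom J = ⋃ a ∈ J, {t | t ∈ a.2} := by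
    ext t; simp [adom]
  rw [he]
  refine hJ.biUnion fun a _ => ?_
  have h2 : {t | t ∈ a.2} = ↑a.2.toFinset := by ext; simp
  rw [h2]
  exact (a.2.toFinset).finite_toSet

def Lv (M : TCM) (I : Set Atom) (h : ℕ) : Set FTerm := {u | ChainP M I h u}

lemma Lv_finite {M : TCM} {I : Set Atom} (hI : (adom I).Finite) :
    ∀ h, (Lv M I h).Finite := by
  intro h
  induction h with
  | zero => exact hI.subset fun u hu => hu
  | succ h ih =>
    refine ((ih.prod hI).image fun p : FTerm × FTerm => nu M p.1 p.2).subset ?_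
    rintro u ⟨-, y, z, rfl, -, hE, hy⟩
    exact ⟨(y, z), ⟨hy, mem_adom_of hE (by simp)⟩, rfl⟩

lemma spawner_bound {M : TCM} {I : Set Atom} {N : ℕ} (hN : ∀ k, M.gIter k ≤ N)
    (hI : (adom I).Finite) :
    ∃ B, ∀ y z, (pG, [y, z]) ∈ CI M I → (pEnd, [z]) ∈ I → ∃ h, h < B ∧ ChainP M I h y := by
  have hPJfin : (PJset M I).Finite := by
    refine (hI.image (par M)).subset ?_
    rintro v ⟨w, hw, ζ, rfl⟩
    exact ⟨nu M v ζ, hw, par_nu M v ζ⟩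
  set Hst := hPJfin.toFinset.sup (htOf M I) with hHst
  have hH : ∀ v ∈ PJset M I, htOf M I v ≤ Hst := fun v hv =>
    Finset.le_sup (hPJfin.mem_toFinset.2 hv)
  refine ⟨N + Hst + 2, ?_⟩
  intro y z hG hE
  obtain ⟨n, hGn⟩ := hG
  obtain ⟨h, hc⟩ := adom_chain (mem_adom_of hGn (show y ∈ [y, z] by simp))
  refine ⟨h, ?_, hc⟩
  by_contra hB
  push_neg at hB
  obtain ⟨k, hkz⟩ := (main_ind hN hH hc hB n).1 z hGn
  have hgk : M.gIter k ≤ h := le_trans (hN k) (by omega)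
  have hcz : ChainP M I (h - M.gIter k) z := by rw [hkz]; exact chainP_anc hc hgk
  exact chainP_pure (by have := hN k; omega) hcz (mem_adom_of hE (by simp))

lemma adom_CI_finite {M : TCM} {I : Set Atom} (hIf : I.Finite)
    (hM : ∃ N, ∀ k, M.gIter k ≤ N) : (adom (CI M I)).Finite := by
  obtain ⟨N, hN⟩ := hM
  have hI := adom_finite hIf
  obtain ⟨B, hB⟩ := spawner_bound hN hI
  have hUnion : (⋃ h ∈ Finset.range B, Lv M I h).Finite :=
    (Finset.range B).finite_toSet.biUnion fun h _ => Lv_finite hI h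
  refine (hI.union ((hUnion.prod hI).image fun p : FTerm × FTerm => nu M p.1 p.2)).subset ?_
  intro u hu
  obtain ⟨a, ⟨n, han⟩, hx⟩ := hu
  obtain ⟨h, hc⟩ := adom_chain (mem_adom_of han hx : u ∈ adom (Clos M I n))
  cases h with
  | zero => exact Or.inl hc
  | succ h =>
    obtain ⟨-, y, z, rfl, hG, hE, hy⟩ := hc
    obtain ⟨h', hh', hc'⟩ := hB y z hG hE
    refine Or.inr ⟨(y, z), ⟨?_, mem_adom_of hE (by simp)⟩, rfl⟩
    exact Set.mem_iUnion₂.2 ⟨h', Finset.mem_range.2 hh', hc'⟩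

lemma CI_shape {M : TCM} {I : Set Atom} : ∀ {n : ℕ} {a : Atom}, a ∈ Clos M I n →
    a ∈ I ∨ (a.1 < 7 + 2 * M.p ∧ a.2.length ≤ 3) := by
  intro n
  induction n with
  | zero => exact fun h => Or.inl h
  | succ n ih =>
    intro a ha
    have hp := p_pos M
    rcases new_atom_cases ha with hcl | ⟨y0, y1, he, -⟩ | ⟨y0, y1, he, -⟩ | ⟨y0, he, -⟩ |
      ⟨y0, y1, he, -⟩ | ⟨i, hi, y0, y1, y2, he, -, -⟩ |
      ⟨i, hi, y0, y1, y2, y3, y4, he, -, -, -⟩ | ⟨i, hi, y0, y1, y2, he, -, -, -⟩ |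
      ⟨y0, y1, y2, -, -, -, hopt⟩ | ⟨y1, y2, -, -, hopt⟩
    · exact ih hcl
    · subst he; exact Or.inr ⟨by simp only [pS]; omega, by simp⟩
    · subst he; exact Or.inr ⟨by simp only [pFlood]; omega, by simp⟩
    · subst he; exact Or.inr ⟨by simp only [pS]; omega, by simp⟩
    · subst he; exact Or.inr ⟨by simp only [pG]; omega, by simp⟩
    · subst he
      have hm : (i + 1) % M.p < M.p := Nat.mod_lt _ hp
      exact Or.inr ⟨by simp only [pR]; omega, by simp⟩
    · subst he; exact Or.inr ⟨by simp only [pT]; omega, by simp⟩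
    · subst he; exact Or.inr ⟨by simp only [pG]; omega, by simp⟩
    · rcases hopt with he | ⟨j, hj, he | he⟩ <;> subst he
      · exact Or.inr ⟨by simp only [pG]; omega, by simp⟩
      · exact Or.inr ⟨by simp only [pR]; omega, by simp⟩
      · exact Or.inr ⟨by simp only [pT]; omega, by simp⟩
    · rcases hopt with he | he | ⟨j, hj, he⟩ <;> subst he
      · exact Or.inr ⟨by simp only [pS0]; omega, by simp⟩
      · exact Or.inr ⟨by simp only [pR]; omega, by simp⟩
      · exact Or.inr ⟨by simp only [pT]; omega, by simp⟩

lemma lists_finite {S : Set FTerm} (hS : S.Finite) :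
    ∀ n, {l : List FTerm | l.length ≤ n ∧ ∀ x ∈ l, x ∈ S}.Finite := by
  intro n
  induction n with
  | zero =>
    refine (Set.finite_singleton ([] : List FTerm)).subset ?_
    rintro l ⟨hl, -⟩
    simp [List.length_eq_zero_iff.1 (Nat.le_zero.1 hl)]
  | succ n ih =>
    refine (((hS.prod ih).image fun p : FTerm × List FTerm => p.1 :: p.2).union
      (Set.finite_singleton [])).subset ?_
    rintro l ⟨hl, hm⟩
    cases l with
    | nil => exact Or.inr rfl
    | cons x xs =>
      refine Or.inl ⟨(x, xs), ⟨hm x (by simp), ?_, fun y hy => hm y (by simp [hy])⟩, rfl⟩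
      show xs.length ≤ n
      have hl' : xs.length + 1 ≤ n + 1 := by simpa using hl
      omega

lemma CI_finite {M : TCM} (I : Finset Atom) (hM : ∃ N, ∀ k, M.gIter k ≤ N) :
    (CI M (↑I : Set Atom)).Finite := by
  have hadom := adom_CI_finite I.finite_toSet hM
  have hlists := lists_finite hadom 3
  refine (I.finite_toSet.union ((Set.finite_Iio (7 + 2 * M.p)).prod hlists)).subset ?_
  intro a ha
  obtain ⟨n, han⟩ := ha
  rcases CI_shape han with h | ⟨h1, h2⟩
  · exact Or.inl h
  · exact Or.inr ⟨h1, h2, fun x hx => mem_adom_of (Clos_subset_CI M _ n han) hx⟩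

end Stmt6

/-- if `M` halts, every fair `X`-derivation from `⟨R_M, I⟩` is finite,
for every instance `I` and every chase variant `X`. -/
theorem stmt_6 (M : TCM) (hM : M.Halts) (X : ChaseVariant) (I : Finset Atom)
    (D : Deriv (RM M) (I : Set Atom)) (hX : D.IsX X) (hfair : D.Fair X) :
    D.Finite :=
  Stmt6.finite_of_CI_finite D (Stmt6.CI_finite I (Stmt6.gIter_bounded M hM))

end
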